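/- arXiv:2210.13100 — 6 statements merged into one kernel-verified Lean document; each statement's English description precedes it below -/
import Mathlib

section
/- In the partially ordered set (𝕋, ≤) of voting tables, every maximal chain has exactly 2n+1 elements, and the function ρ(x,y,z,t) = x − t is a rank function: if T < S then ρ(T) < ρ(S), and if S is an immediate successor of T (i.e., S covers T in the order) then ρ(S) = ρ(T) + 1. -/
/-- The sum of the four entries of a voting table. -/
def tsum4 (T : ℕ × ℕ × ℕ × ℕ) : ℕ := T.1 + T.2.1 + T.2.2.1 + T.2.2.2

/-- One elementary step of the order generated by the four relations
`(x,y,z,t) ≤ (x,y,z+1,t−1)`, `(x,y,z,t) ≤ (x,y+1,z,t−1)`,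
`(x,y,z,t) ≤ (x+1,y−1,z,t)`, `(x,y,z,t) ≤ (x+1,y,z−1,t)`. -/
def tableStep (T S : ℕ × ℕ × ℕ × ℕ) : Prop :=
  (∃ x y z t : ℕ, T = (x, y, z, t + 1) ∧ S = (x, y, z + 1, t)) ∨
  (∃ x y z t : ℕ, T = (x, y, z, t + 1) ∧ S = (x, y + 1, z, t)) ∨
  (∃ x y z t : ℕ, T = (x, y + 1, z, t) ∧ S = (x + 1, y, z, t)) ∨
  (∃ x y z t : ℕ, T = (x, y, z + 1, t) ∧ S = (x + 1, y, z, t))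

/-- The partial order on voting tables generated by the four relations. -/
def tableLe : ℕ × ℕ × ℕ × ℕ → ℕ × ℕ × ℕ × ℕ → Prop :=
  Relation.ReflTransGen tableStep

/-- The rank function ρ(x,y,z,t) = x − t. -/
def trho (T : ℕ × ℕ × ℕ × ℕ) : ℤ := (T.1 : ℤ) - (T.2.2.2 : ℤ)

lemma step_sum {T S : ℕ × ℕ × ℕ × ℕ} (h : tableStep T S) : tsum4 S = tsum4 T := by
  rcases h with ⟨x,y,z,t,rfl,rfl⟩|⟨x,y,z,t,rfl,rfl⟩|⟨x,y,z,t,rfl,rfl⟩|⟨x,y,z,t,rfl,rfl⟩ <;>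
    simp only [tsum4] <;> omega

lemma step_rho {T S : ℕ × ℕ × ℕ × ℕ} (h : tableStep T S) : trho S = trho T + 1 := by
  rcases h with ⟨x,y,z,t,rfl,rfl⟩|⟨x,y,z,t,rfl,rfl⟩|⟨x,y,z,t,rfl,rfl⟩|⟨x,y,z,t,rfl,rfl⟩ <;>
    simp only [trho] <;> push_cast <;> ring

lemma le_sum {T S : ℕ × ℕ × ℕ × ℕ} (h : tableLe T S) : tsum4 S = tsum4 T := by
  induction h with
  | refl => rfl
  | tail _ h ih => rw [step_sum h, ih]

lemma le_rho {T S : ℕ × ℕ × ℕ × ℕ} (h : tableLe T S) : trho T ≤ trho S := by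
  induction h with
  | refl => exact le_refl _
  | tail _ h ih => rw [step_rho h]; linarith

lemma lt_rho {T S : ℕ × ℕ × ℕ × ℕ} (h : tableLe T S) (hne : T ≠ S) : trho T < trho S := by
  rcases Relation.ReflTransGen.cases_head h with rfl | ⟨U, hstep, hUS⟩
  · exact absurd rfl hne
  · have h1 := step_rho hstep
    have h2 := le_rho hUS
    linarith

lemma mk4_eq {a b c d a' b' c' d' : ℕ} (h1 : a = a') (h2 : b = b') (h3 : c = c')
    (h4 : d = d') : ((a, b, c, d) : ℕ × ℕ × ℕ × ℕ) = (a', b', c', d') := by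
  rw [h1, h2, h3, h4]

lemma tableLe_congr {T T' S S' : ℕ × ℕ × ℕ × ℕ} (h1 : T = T') (h2 : S = S')
    (h : tableLe T S) : tableLe T' S' := h1 ▸ h2 ▸ h

lemma multiA (k x y z t : ℕ) : tableLe (x, y, z, t + k) (x, y, z + k, t) := by
  induction k generalizing z with
  | zero => exact Relation.ReflTransGen.refl
  | succ k ih =>
    refine Relation.ReflTransGen.head (Or.inl ⟨x, y, z, t + k, rfl, rfl⟩)
      (tableLe_congr rfl (mk4_eq rfl rfl (by omega) rfl) (ih (z + 1)))

lemma multiB (k x y z t : ℕ) : tableLe (x, y, z, t + k) (x, y + k, z, t) := by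
  induction k generalizing y with
  | zero => exact Relation.ReflTransGen.refl
  | succ k ih =>
    refine Relation.ReflTransGen.head (Or.inr (Or.inl ⟨x, y, z, t + k, rfl, rfl⟩))
      (tableLe_congr rfl (mk4_eq rfl (by omega) rfl rfl) (ih (y + 1)))

lemma multiC (k x y z t : ℕ) : tableLe (x, y + k, z, t) (x + k, y, z, t) := by
  induction k generalizing x with
  | zero => exact Relation.ReflTransGen.refl
  | succ k ih =>
    refine Relation.ReflTransGen.head (Or.inr (Or.inr (Or.inl ⟨x, y + k, z, t, ?_, rfl⟩)))
      (tableLe_congr rfl (mk4_eq (by omega) rfl rfl rfl) (ih (x + 1)))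
    exact mk4_eq rfl (by omega) rfl rfl

lemma multiD (k x y z t : ℕ) : tableLe (x, y, z + k, t) (x + k, y, z, t) := by
  induction k generalizing x with
  | zero => exact Relation.ReflTransGen.refl
  | succ k ih =>
    refine Relation.ReflTransGen.head (Or.inr (Or.inr (Or.inr ⟨x, y, z + k, t, ?_, rfl⟩)))
      (tableLe_congr rfl (mk4_eq (by omega) rfl rfl rfl) (ih (x + 1)))
    exact mk4_eq rfl (by omega) rfl rfl

lemma bot_le_table (x y z t : ℕ) : tableLe (0, 0, 0, x + y + z + t) (x, y, z, t) := by
  have h1 : tableLe (0, 0, 0, x + y + z + t) (0, 0, x + z, y + t) :=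
    tableLe_congr (mk4_eq (by omega) (by omega) (by omega) (by omega))
      (mk4_eq (by omega) (by omega) (by omega) (by omega)) (multiA (x + z) 0 0 0 (y + t))
  have h2 : tableLe (0, 0, x + z, y + t) (0, y, x + z, t) :=
    tableLe_congr (mk4_eq (by omega) (by omega) (by omega) (by omega))
      (mk4_eq (by omega) (by omega) (by omega) (by omega)) (multiB y 0 0 (x + z) t)
  have h3 : tableLe (0, y, x + z, t) (x, y, z, t) :=
    tableLe_congr (mk4_eq (by omega) (by omega) (by omega) (by omega))
      (mk4_eq (by omega) (by omega) (by omega) (by omega)) (multiD x 0 y z t)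
  exact (h1.trans h2).trans h3

lemma table_le_top (x y z t : ℕ) : tableLe (x, y, z, t) (x + y + z + t, 0, 0, 0) := by
  have h1 : tableLe (x, y, z, t) (x, y + t, z, 0) :=
    tableLe_congr (mk4_eq (by omega) (by omega) (by omega) (by omega))
      (mk4_eq (by omega) (by omega) (by omega) (by omega)) (multiB t x y z 0)
  have h2 : tableLe (x, y + t, z, 0) (x + y + t, 0, z, 0) :=
    tableLe_congr (mk4_eq (by omega) (by omega) (by omega) (by omega))
      (mk4_eq (by omega) (by omega) (by omega) (by omega)) (multiC (y + t) x 0 z 0)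
  have h3 : tableLe (x + y + t, 0, z, 0) (x + y + z + t, 0, 0, 0) :=
    tableLe_congr (mk4_eq (by omega) (by omega) (by omega) (by omega))
      (mk4_eq (by omega) (by omega) (by omega) (by omega)) (multiD z (x + y + t) 0 0 0)
  exact (h1.trans h2).trans h3

/-- In the poset (𝕋, ≤) of voting tables of a committee of odd size `n = 2m+1`,
every maximal chain has exactly `2n+1` elements, and `ρ(x,y,z,t) = x − t` is a rank
function: `T < S` implies `ρ(T) < ρ(S)`, and if `S` is an immediate successor of `T`
then `ρ(S) = ρ(T) + 1`. -/
theorem maximal_chains_and_rank (n m : ℕ) (hm : 1 ≤ m) (hn : n = 2 * m + 1) :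
    (∀ C : Set {T : ℕ × ℕ × ℕ × ℕ // tsum4 T = n},
      IsMaxChain (fun T S => tableLe T.1 S.1) C → C.ncard = 2 * n + 1) ∧
    (∀ T S : ℕ × ℕ × ℕ × ℕ, tsum4 T = n → tsum4 S = n →
      tableLe T S → T ≠ S → trho T < trho S) ∧
    (∀ T S : ℕ × ℕ × ℕ × ℕ, tsum4 T = n → tsum4 S = n →
      tableLe T S → T ≠ S →
      (∀ U : ℕ × ℕ × ℕ × ℕ, tsum4 U = n → tableLe T U → tableLe U S → U = T ∨ U = S) →
      trho S = trho T + 1) := by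
  refine ⟨?_, fun T S _ _ hle hne => lt_rho hle hne, ?_⟩
  · intro C hC
    set f : {T : ℕ × ℕ × ℕ × ℕ // tsum4 T = n} → ℤ := fun T => trho T.1 with hf
    have hbound : ∀ T : {T : ℕ × ℕ × ℕ × ℕ // tsum4 T = n}, -(n:ℤ) ≤ f T ∧ f T ≤ n := by
      rintro ⟨⟨x, y, z, t⟩, h⟩
      simp only [tsum4] at h
      simp only [hf, trho]
      constructor <;> omega
    have hinj : Set.InjOn f C := by
      intro a ha b hb hab
      by_contra hne
      rcases hC.1 ha hb hne with h | h
      · exact absurd hab (ne_of_lt (lt_rho h (fun h' => hne (Subtype.ext h'))))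
      · exact absurd hab.symm (ne_of_lt (lt_rho h (fun h' => hne (Subtype.ext h'.symm))))
    have hsb : tsum4 (0, 0, 0, n) = n := by simp [tsum4]
    have hst : tsum4 (n, 0, 0, 0) = n := by simp [tsum4]
    set bot : {T : ℕ × ℕ × ℕ × ℕ // tsum4 T = n} := ⟨(0, 0, 0, n), hsb⟩ with hbot
    set top : {T : ℕ × ℕ × ℕ × ℕ // tsum4 T = n} := ⟨(n, 0, 0, 0), hst⟩ with htop
    have hbotle : ∀ T : {T : ℕ × ℕ × ℕ × ℕ // tsum4 T = n}, tableLe bot.1 T.1 := by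
      rintro ⟨⟨x, y, z, t⟩, h⟩
      simp only [tsum4] at h
      have := bot_le_table x y z t
      rwa [h] at this
    have htople : ∀ T : {T : ℕ × ℕ × ℕ × ℕ // tsum4 T = n}, tableLe T.1 top.1 := by
      rintro ⟨⟨x, y, z, t⟩, h⟩
      simp only [tsum4] at h
      have := table_le_top x y z t
      rwa [h] at this
    have hbotmem : bot ∈ C := by
      have hchain : IsChain (fun T S => tableLe T.1 S.1) (insert bot C) :=
        hC.1.insert (fun b _ _ => Or.inl (hbotle b))
      have := hC.2 hchain (Set.subset_insert _ _)
      rw [this]; exact Set.mem_insert _ _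
    have htopmem : top ∈ C := by
      have hchain : IsChain (fun T S => tableLe T.1 S.1) (insert top C) :=
        hC.1.insert (fun b _ _ => Or.inr (htople b))
      have := hC.2 hchain (Set.subset_insert _ _)
      rw [this]; exact Set.mem_insert _ _
    have himsub : f '' C ⊆ Set.Icc (-(n:ℤ)) n := by
      rintro _ ⟨T, _, rfl⟩
      exact ⟨(hbound T).1, (hbound T).2⟩
    have hfinC : C.Finite :=
      Set.Finite.of_finite_image ((Set.finite_Icc _ _).subset himsub) hinj
    have hfb : f bot = -(n:ℤ) := by simp [hf, hbot, trho]
    have hft : f top = (n:ℤ) := by simp [hf, htop, trho]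
    have himg : f '' C = Set.Icc (-(n:ℤ)) n := by
      refine Set.Subset.antisymm himsub ?_
      intro k hk
      by_contra hkim
      have hkb : -(n:ℤ) < k :=
        lt_of_le_of_ne hk.1 (fun h => hkim ⟨bot, hbotmem, by rw [hfb, h]⟩)
      have hkt : k < (n:ℤ) :=
        lt_of_le_of_ne hk.2 (fun h => hkim ⟨top, htopmem, by rw [hft, h]⟩)
      set A := {T ∈ C | f T < k} with hA
      set B := {T ∈ C | k < f T} with hB
      have hAB : ∀ T ∈ C, T ∈ A ∨ T ∈ B := by
        intro T hT
        rcases lt_trichotomy (f T) k with h | h | h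
        · exact Or.inl ⟨hT, h⟩
        · exact absurd ⟨T, hT, h⟩ hkim
        · exact Or.inr ⟨hT, h⟩
      have hAne : A.Nonempty := ⟨bot, hbotmem, by rw [hfb]; exact hkb⟩
      have hBne : B.Nonempty := ⟨top, htopmem, by rw [hft]; exact hkt⟩
      obtain ⟨a, haA, hamax⟩ : ∃ a ∈ A, ∀ a' ∈ A, f a ≤ f a' → f a = f a' := by
        obtain ⟨a, haA, h⟩ := Set.Finite.exists_maximalFor f A
          (hfinC.subset (fun T hT => hT.1)) hAne
        exact ⟨a, haA, fun a' ha' hle => le_antisymm hle (h ha' hle)⟩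
      obtain ⟨b, hbB, hbmin⟩ : ∃ b ∈ B, ∀ b' ∈ B, f b' ≤ f b → f b = f b' := by
        obtain ⟨b, hbB, h⟩ := Set.Finite.exists_minimalFor f B
          (hfinC.subset (fun T hT => hT.1)) hBne
        exact ⟨b, hbB, fun b' hb' hle => le_antisymm (h hb' hle) hle⟩
      have hfa : f a < k := haA.2
      have hfbk : k < f b := hbB.2
      have hne : a ≠ b := by
        intro h; rw [h] at hfa; exact absurd (hfa.trans hfbk) (lt_irrefl _)
      have hab : tableLe a.1 b.1 := by
        rcases hC.1 haA.1 hbB.1 hne with h | h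
        · exact h
        · have : f b ≤ f a := le_rho h
          linarith
      have hvne : a.1 ≠ b.1 := fun h => hne (Subtype.ext h)
      rcases Relation.ReflTransGen.cases_head hab with h | ⟨U, hstep, hUb⟩
      · exact hvne h
      · have hUsum : tsum4 U = n := (step_sum hstep).trans a.2
        set u : {T : ℕ × ℕ × ℕ × ℕ // tsum4 T = n} := ⟨U, hUsum⟩ with hu
        have hfu : f u = f a + 1 := step_rho hstep
        have hau : tableLe a.1 u.1 := Relation.ReflTransGen.single hstep
        have hAle : ∀ c ∈ A, tableLe c.1 a.1 := by
          intro c hc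
          by_cases hca : c = a
          · rw [hca]; exact Relation.ReflTransGen.refl
          · rcases hC.1 hc.1 haA.1 hca with h | h
            · exact h
            · have h1 : f a ≤ f c := le_rho h
              have h2 : f a = f c := hamax c hc h1
              have h3 : f a < f c := lt_rho h (fun h' => hca (Subtype.ext h').symm)
              linarith
        have hBle : ∀ c ∈ B, tableLe b.1 c.1 := by
          intro c hc
          by_cases hcb : c = b
          · rw [hcb]; exact Relation.ReflTransGen.refl
          · rcases hC.1 hbB.1 hc.1 (fun h => hcb h.symm) with h | h
            · exact h
            · have h1 : f c ≤ f b := le_rho h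
              have h2 : f b = f c := hbmin c hc h1
              have h3 : f c < f b := lt_rho h (fun h' => hcb (Subtype.ext h'))
              linarith
        have hchain : IsChain (fun T S => tableLe T.1 S.1) (insert u C) := by
          refine hC.1.insert ?_
          intro c hc _
          rcases hAB c hc with h | h
          · exact Or.inr ((hAle c h).trans hau)
          · exact Or.inl (hUb.trans (hBle c h))
        have humem : u ∈ C := by
          have := hC.2 hchain (Set.subset_insert _ _)
          rw [this]; exact Set.mem_insert _ _
        have huk : f u ≠ k := fun h => hkim ⟨u, humem, h⟩
        have hule : f u < k := lt_of_le_of_ne (by linarith) huk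
        have : f a = f u := hamax u ⟨humem, hule⟩ (by linarith)
        linarith
    have hcard : C.ncard = (f '' C).ncard := (Set.ncard_image_of_injOn hinj).symm
    rw [hcard, himg, ← Finset.coe_Icc, Set.ncard_coe_finset, Int.card_Icc]
    omega
  · intro T S hT hS hle hne hcov
    rcases Relation.ReflTransGen.cases_head hle with rfl | ⟨U, hstep, hUS⟩
    · exact absurd rfl hne
    · have hUsum : tsum4 U = n := (step_sum hstep).trans hT
      rcases hcov U hUsum (Relation.ReflTransGen.single hstep) hUS with rfl | rfl
      · have := step_rho hstep; linarith
      · exact step_rho hstep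
end

section
/- Let r be an admissible decision rule and let 1/2 < θ < 1. Then Σ_{T=(x,y,z,t): r(T)=1} (n!/(x!·y!·z!·t!)) θ^{x+2y+t}(1−θ)^{x+2z+t} = Σ_{T=(x,y,z,t): r(T)=1} (n!/(x!·y!·z!·t!)) θ^{x+2z+t}(1−θ)^{x+2y+t}, and moreover Σ_{T=(x,y,z,t): r(T)=1} (n!/(x!·y!·z!·t!)) θ^{x+2y+t}(1−θ)^{x+2z+t} ≥ Σ_{T=(x,y,z,t): r(T)=1} (n!/(x!·y!·z!·t!)) θ^{y+z+2t}(1−θ)^{2x+y+z}. -/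
/-- The finite set of all voting tables of a committee of size `n`. -/
def tables (n : ℕ) : Finset (ℕ × ℕ × ℕ × ℕ) :=
  ((Finset.range (n+1)) ×ˢ (Finset.range (n+1)) ×ˢ (Finset.range (n+1)) ×ˢ
    (Finset.range (n+1))).filter (fun T => tsum4 T = n)

/-- Multinomial coefficient `n!/(x! y! z! t!)` as a real number. -/
noncomputable def mcoef (n : ℕ) (T : ℕ × ℕ × ℕ × ℕ) : ℝ :=
  (n.factorial : ℝ) /
    (T.1.factorial * T.2.1.factorial * T.2.2.1.factorial * T.2.2.2.factorial)

/- ### Auxiliary machinery -/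

lemma mem_tables {k : ℕ} {T : ℕ × ℕ × ℕ × ℕ} : T ∈ tables k ↔ tsum4 T = k := by
  obtain ⟨x, y, z, t⟩ := T
  rw [tables, Finset.mem_filter]
  simp only [tables, tsum4, Finset.mem_filter, Finset.mem_product, Finset.mem_range]
  omega

/-- The weighted sum of a function over all tables of size `k`. -/
noncomputable def wsum (k : ℕ) (f : ℕ × ℕ × ℕ × ℕ → ℝ) (a b c d : ℝ) : ℝ :=
  ∑ T ∈ tables k, mcoef k T * f T * (a ^ T.1 * b ^ T.2.1 * c ^ T.2.2.1 * d ^ T.2.2.2)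

lemma sum_shift (k : ℕ) (e : ℕ × ℕ × ℕ × ℕ → ℕ × ℕ × ℕ × ℕ) (he : Function.Injective e)
    (hsum : ∀ T, tsum4 (e T) = tsum4 T + 1)
    (g : ℕ × ℕ × ℕ × ℕ → ℝ)
    (hg : ∀ T ∈ tables (k+1), T ∉ (tables k).image e → g T = 0) :
    ∑ T ∈ tables (k+1), g T = ∑ T ∈ tables k, g (e T) := by
  rw [← Finset.sum_image (fun a _ b _ h => he h)]
  refine (Finset.sum_subset ?_ hg).symm
  intro T hT
  rw [Finset.mem_image] at hT
  obtain ⟨T', hT', rfl⟩ := hT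
  rw [mem_tables, hsum, mem_tables.mp hT']

lemma fact_ne (x : ℕ) : ((x.factorial : ℝ)) ≠ 0 :=
  Nat.cast_ne_zero.mpr (Nat.factorial_ne_zero x)

lemma mcoef_shiftX (k x y z t : ℕ) :
    ((x:ℝ)+1)/((k:ℝ)+1) * mcoef (k+1) (x+1, y, z, t) = mcoef k (x, y, z, t) := by
  simp only [mcoef, Nat.factorial_succ]
  push_cast
  have h1 := fact_ne x; have h2 := fact_ne y; have h3 := fact_ne z; have h4 := fact_ne t
  have h5 : ((x:ℝ)+1) ≠ 0 := by positivity
  have h6 : ((k:ℝ)+1) ≠ 0 := by positivity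
  field_simp

lemma mcoef_shiftY (k x y z t : ℕ) :
    ((y:ℝ)+1)/((k:ℝ)+1) * mcoef (k+1) (x, y+1, z, t) = mcoef k (x, y, z, t) := by
  simp only [mcoef, Nat.factorial_succ]
  push_cast
  have h1 := fact_ne x; have h2 := fact_ne y; have h3 := fact_ne z; have h4 := fact_ne t
  have h5 : ((y:ℝ)+1) ≠ 0 := by positivity
  have h6 : ((k:ℝ)+1) ≠ 0 := by positivity
  field_simp

lemma mcoef_shiftZ (k x y z t : ℕ) :
    ((z:ℝ)+1)/((k:ℝ)+1) * mcoef (k+1) (x, y, z+1, t) = mcoef k (x, y, z, t) := by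
  simp only [mcoef, Nat.factorial_succ]
  push_cast
  have h1 := fact_ne x; have h2 := fact_ne y; have h3 := fact_ne z; have h4 := fact_ne t
  have h5 : ((z:ℝ)+1) ≠ 0 := by positivity
  have h6 : ((k:ℝ)+1) ≠ 0 := by positivity
  field_simp

lemma mcoef_shiftT (k x y z t : ℕ) :
    ((t:ℝ)+1)/((k:ℝ)+1) * mcoef (k+1) (x, y, z, t+1) = mcoef k (x, y, z, t) := by
  simp only [mcoef, Nat.factorial_succ]
  push_cast
  have h1 := fact_ne x; have h2 := fact_ne y; have h3 := fact_ne z; have h4 := fact_ne t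
  have h5 : ((t:ℝ)+1) ≠ 0 := by positivity
  have h6 : ((k:ℝ)+1) ≠ 0 := by positivity
  field_simp

/-- Pascal-type recursion for `wsum`: peeling off one voter. -/
lemma wsum_succ (k : ℕ) (f : ℕ × ℕ × ℕ × ℕ → ℝ) (a b c d : ℝ) :
    wsum (k+1) f a b c d
      = a * wsum k (fun T => f (T.1+1, T.2.1, T.2.2.1, T.2.2.2)) a b c d
      + b * wsum k (fun T => f (T.1, T.2.1+1, T.2.2.1, T.2.2.2)) a b c d
      + c * wsum k (fun T => f (T.1, T.2.1, T.2.2.1+1, T.2.2.2)) a b c d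
      + d * wsum k (fun T => f (T.1, T.2.1, T.2.2.1, T.2.2.2+1)) a b c d := by
  classical
  set gX : ℕ × ℕ × ℕ × ℕ → ℝ := fun T =>
    (T.1 : ℝ)/((k:ℝ)+1) * mcoef (k+1) T * f T *
      (a ^ T.1 * b ^ T.2.1 * c ^ T.2.2.1 * d ^ T.2.2.2) with hgX
  set gY : ℕ × ℕ × ℕ × ℕ → ℝ := fun T =>
    (T.2.1 : ℝ)/((k:ℝ)+1) * mcoef (k+1) T * f T *
      (a ^ T.1 * b ^ T.2.1 * c ^ T.2.2.1 * d ^ T.2.2.2) with hgY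
  set gZ : ℕ × ℕ × ℕ × ℕ → ℝ := fun T =>
    (T.2.2.1 : ℝ)/((k:ℝ)+1) * mcoef (k+1) T * f T *
      (a ^ T.1 * b ^ T.2.1 * c ^ T.2.2.1 * d ^ T.2.2.2) with hgZ
  set gT : ℕ × ℕ × ℕ × ℕ → ℝ := fun T =>
    (T.2.2.2 : ℝ)/((k:ℝ)+1) * mcoef (k+1) T * f T *
      (a ^ T.1 * b ^ T.2.1 * c ^ T.2.2.1 * d ^ T.2.2.2) with hgT
  have step1 : wsum (k+1) f a b c d
      = ∑ T ∈ tables (k+1), (gX T + gY T + gZ T + gT T) := by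
    refine Finset.sum_congr rfl ?_
    intro T hT
    have hs := mem_tables.mp hT
    obtain ⟨x, y, z, t⟩ := T
    simp only [tsum4] at hs
    simp only [hgX, hgY, hgZ, hgT]
    have hcast : (x : ℝ) + y + z + t = (k:ℝ) + 1 := by exact_mod_cast congrArg (Nat.cast (R := ℝ)) hs
    have h6 : ((k:ℝ)+1) ≠ 0 := by positivity
    have hfrac : (x:ℝ)/((k:ℝ)+1) + (y:ℝ)/((k:ℝ)+1) + (z:ℝ)/((k:ℝ)+1) + (t:ℝ)/((k:ℝ)+1) = 1 := by
      rw [← add_div, ← add_div, ← add_div, hcast, div_self h6]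
    linear_combination (-(mcoef (k+1) (x,y,z,t) * f (x,y,z,t) * (a^x*b^y*c^z*d^t))) * hfrac
  rw [step1]
  rw [Finset.sum_add_distrib, Finset.sum_add_distrib, Finset.sum_add_distrib]
  have hX : ∑ T ∈ tables (k+1), gX T
      = a * wsum k (fun T => f (T.1+1, T.2.1, T.2.2.1, T.2.2.2)) a b c d := by
    rw [sum_shift k (fun T => (T.1+1, T.2.1, T.2.2.1, T.2.2.2))
      (fun T S h => by
        obtain ⟨x,y,z,t⟩ := T; obtain ⟨x',y',z',t'⟩ := S
        simp only [Prod.mk.injEq] at h ⊢; omega)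
      (fun T => by obtain ⟨x,y,z,t⟩ := T; simp [tsum4]; omega)
      gX
      (by
        intro T hT hnot
        obtain ⟨x, y, z, t⟩ := T
        match x with
        | 0 => simp [hgX]
        | x+1 =>
          exfalso; apply hnot
          rw [Finset.mem_image]
          refine ⟨(x, y, z, t), ?_, rfl⟩
          rw [mem_tables]
          have := mem_tables.mp hT
          simp only [tsum4] at this ⊢
          omega)]
    rw [wsum, Finset.mul_sum]
    refine Finset.sum_congr rfl ?_
    intro T hT
    obtain ⟨x, y, z, t⟩ := T
    simp only [hgX]
    rw [show ((x+1 : ℕ) : ℝ) = (x:ℝ)+1 by push_cast; ring]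
    linear_combination (f (x+1, y, z, t) * (a^(x+1) * b^y * c^z * d^t)) * mcoef_shiftX k x y z t
  have hY : ∑ T ∈ tables (k+1), gY T
      = b * wsum k (fun T => f (T.1, T.2.1+1, T.2.2.1, T.2.2.2)) a b c d := by
    rw [sum_shift k (fun T => (T.1, T.2.1+1, T.2.2.1, T.2.2.2))
      (fun T S h => by
        obtain ⟨x,y,z,t⟩ := T; obtain ⟨x',y',z',t'⟩ := S
        simp only [Prod.mk.injEq] at h ⊢; omega)
      (fun T => by obtain ⟨x,y,z,t⟩ := T; simp [tsum4]; omega)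
      gY
      (by
        intro T hT hnot
        obtain ⟨x, y, z, t⟩ := T
        match y with
        | 0 => simp [hgY]
        | y+1 =>
          exfalso; apply hnot
          rw [Finset.mem_image]
          refine ⟨(x, y, z, t), ?_, rfl⟩
          rw [mem_tables]
          have := mem_tables.mp hT
          simp only [tsum4] at this ⊢
          omega)]
    rw [wsum, Finset.mul_sum]
    refine Finset.sum_congr rfl ?_
    intro T hT
    obtain ⟨x, y, z, t⟩ := T
    simp only [hgY]
    rw [show ((y+1 : ℕ) : ℝ) = (y:ℝ)+1 by push_cast; ring]
    linear_combination (f (x, y+1, z, t) * (a^x * b^(y+1) * c^z * d^t)) * mcoef_shiftY k x y z t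
  have hZ : ∑ T ∈ tables (k+1), gZ T
      = c * wsum k (fun T => f (T.1, T.2.1, T.2.2.1+1, T.2.2.2)) a b c d := by
    rw [sum_shift k (fun T => (T.1, T.2.1, T.2.2.1+1, T.2.2.2))
      (fun T S h => by
        obtain ⟨x,y,z,t⟩ := T; obtain ⟨x',y',z',t'⟩ := S
        simp only [Prod.mk.injEq] at h ⊢; omega)
      (fun T => by obtain ⟨x,y,z,t⟩ := T; simp [tsum4]; omega)
      gZ
      (by
        intro T hT hnot
        obtain ⟨x, y, z, t⟩ := T
        match z with
        | 0 => simp [hgZ]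
        | z+1 =>
          exfalso; apply hnot
          rw [Finset.mem_image]
          refine ⟨(x, y, z, t), ?_, rfl⟩
          rw [mem_tables]
          have := mem_tables.mp hT
          simp only [tsum4] at this ⊢
          omega)]
    rw [wsum, Finset.mul_sum]
    refine Finset.sum_congr rfl ?_
    intro T hT
    obtain ⟨x, y, z, t⟩ := T
    simp only [hgZ]
    rw [show ((z+1 : ℕ) : ℝ) = (z:ℝ)+1 by push_cast; ring]
    linear_combination (f (x, y, z+1, t) * (a^x * b^y * c^(z+1) * d^t)) * mcoef_shiftZ k x y z t
  have hT4 : ∑ T ∈ tables (k+1), gT T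
      = d * wsum k (fun T => f (T.1, T.2.1, T.2.2.1, T.2.2.2+1)) a b c d := by
    rw [sum_shift k (fun T => (T.1, T.2.1, T.2.2.1, T.2.2.2+1))
      (fun T S h => by
        obtain ⟨x,y,z,t⟩ := T; obtain ⟨x',y',z',t'⟩ := S
        simp only [Prod.mk.injEq] at h ⊢; omega)
      (fun T => by obtain ⟨x,y,z,t⟩ := T; simp [tsum4]; omega)
      gT
      (by
        intro T hT hnot
        obtain ⟨x, y, z, t⟩ := T
        match t with
        | 0 => simp [hgT]
        | t+1 =>
          exfalso; apply hnot
          rw [Finset.mem_image]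
          refine ⟨(x, y, z, t), ?_, rfl⟩
          rw [mem_tables]
          have := mem_tables.mp hT
          simp only [tsum4] at this ⊢
          omega)]
    rw [wsum, Finset.mul_sum]
    refine Finset.sum_congr rfl ?_
    intro T hT
    obtain ⟨x, y, z, t⟩ := T
    simp only [hgT]
    rw [show ((t+1 : ℕ) : ℝ) = (t:ℝ)+1 by push_cast; ring]
    linear_combination (f (x, y, z, t+1) * (a^x * b^y * c^z * d^(t+1))) * mcoef_shiftT k x y z t
  rw [hX, hY, hZ, hT4]

lemma mcoef_nonneg (k : ℕ) (T : ℕ × ℕ × ℕ × ℕ) : 0 ≤ mcoef k T := by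
  unfold mcoef
  positivity

/-- Monotonicity of `wsum` in the function argument. -/
lemma wsum_le_wsum (k : ℕ) {f g : ℕ × ℕ × ℕ × ℕ → ℝ}
    (h : ∀ T, tsum4 T = k → f T ≤ g T) {a b c d : ℝ}
    (ha : 0 ≤ a) (hb : 0 ≤ b) (hc : 0 ≤ c) (hd : 0 ≤ d) :
    wsum k f a b c d ≤ wsum k g a b c d := by
  refine Finset.sum_le_sum ?_
  intro T hT
  have hw : 0 ≤ a ^ T.1 * b ^ T.2.1 * c ^ T.2.2.1 * d ^ T.2.2.2 := by positivity
  exact mul_le_mul_of_nonneg_right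
    (mul_le_mul_of_nonneg_left (h T (mem_tables.mp hT)) (mcoef_nonneg k T)) hw

/-- Key lemma: the weighted sum of a nonneg function monotone under "P-vote upgrades"
is monotone in the P-success probability. -/
lemma key : ∀ (k : ℕ) (f : ℕ × ℕ × ℕ × ℕ → ℝ), (∀ T, 0 ≤ f T) →
    (∀ x y z t : ℕ, x+y+z+t+1 = k → f (x,y,z,t+1) ≤ f (x,y+1,z,t)) →
    (∀ x y z t : ℕ, x+y+z+t+1 = k → f (x,y,z+1,t) ≤ f (x+1,y,z,t)) →
    ∀ (c d p q : ℝ), 0 ≤ c → 0 ≤ d → 0 ≤ q → q ≤ p → p ≤ 1 →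
    wsum k f (q*c) (q*d) ((1-q)*c) ((1-q)*d) ≤ wsum k f (p*c) (p*d) ((1-p)*c) ((1-p)*d) := by
  intro k
  induction k with
  | zero =>
    intro f hf0 h1 h2 c d p q hc hd hq hpq hp
    apply le_of_eq
    refine Finset.sum_congr rfl ?_
    intro T hT
    have hs := mem_tables.mp hT
    obtain ⟨x, y, z, t⟩ := T
    simp only [tsum4] at hs
    have hx : x = 0 := by omega
    have hy : y = 0 := by omega
    have hz : z = 0 := by omega
    have ht : t = 0 := by omega
    subst hx; subst hy; subst hz; subst ht
    simp
  | succ k ih =>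
    intro f hf0 h1 h2 c d p q hc hd hq hpq hp
    rw [wsum_succ, wsum_succ]
    set fX := fun T : ℕ × ℕ × ℕ × ℕ => f (T.1+1, T.2.1, T.2.2.1, T.2.2.2) with hfX
    set fY := fun T : ℕ × ℕ × ℕ × ℕ => f (T.1, T.2.1+1, T.2.2.1, T.2.2.2) with hfY
    set fZ := fun T : ℕ × ℕ × ℕ × ℕ => f (T.1, T.2.1, T.2.2.1+1, T.2.2.2) with hfZ
    set fT := fun T : ℕ × ℕ × ℕ × ℕ => f (T.1, T.2.1, T.2.2.1, T.2.2.2+1) with hfT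
    have hq1 : q ≤ 1 := le_trans hpq hp
    have hp0 : 0 ≤ p := le_trans hq hpq
    -- IH for each composition
    have iX : wsum k fX (q*c) (q*d) ((1-q)*c) ((1-q)*d)
        ≤ wsum k fX (p*c) (p*d) ((1-p)*c) ((1-p)*d) :=
      ih fX (fun T => hf0 _)
        (fun x y z t h => h1 (x+1) y z t (by omega))
        (fun x y z t h => h2 (x+1) y z t (by omega))
        c d p q hc hd hq hpq hp
    have iY : wsum k fY (q*c) (q*d) ((1-q)*c) ((1-q)*d)
        ≤ wsum k fY (p*c) (p*d) ((1-p)*c) ((1-p)*d) :=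
      ih fY (fun T => hf0 _)
        (fun x y z t h => h1 x (y+1) z t (by omega))
        (fun x y z t h => h2 x (y+1) z t (by omega))
        c d p q hc hd hq hpq hp
    have iZ : wsum k fZ (q*c) (q*d) ((1-q)*c) ((1-q)*d)
        ≤ wsum k fZ (p*c) (p*d) ((1-p)*c) ((1-p)*d) :=
      ih fZ (fun T => hf0 _)
        (fun x y z t h => h1 x y (z+1) t (by omega))
        (fun x y z t h => h2 x y (z+1) t (by omega))
        c d p q hc hd hq hpq hp
    have iT : wsum k fT (q*c) (q*d) ((1-q)*c) ((1-q)*d)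
        ≤ wsum k fT (p*c) (p*d) ((1-p)*c) ((1-p)*d) :=
      ih fT (fun T => hf0 _)
        (fun x y z t h => h1 x y z (t+1) (by omega))
        (fun x y z t h => h2 x y z (t+1) (by omega))
        c d p q hc hd hq hpq hp
    -- cross inequalities at parameter q
    have wnn1 : (0:ℝ) ≤ q*c := mul_nonneg hq hc
    have wnn2 : (0:ℝ) ≤ q*d := mul_nonneg hq hd
    have wnn3 : (0:ℝ) ≤ (1-q)*c := mul_nonneg (by linarith) hc
    have wnn4 : (0:ℝ) ≤ (1-q)*d := mul_nonneg (by linarith) hd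
    have cZX : wsum k fZ (q*c) (q*d) ((1-q)*c) ((1-q)*d)
        ≤ wsum k fX (q*c) (q*d) ((1-q)*c) ((1-q)*d) := by
      refine wsum_le_wsum k ?_ wnn1 wnn2 wnn3 wnn4
      intro T hs
      obtain ⟨x, y, z, t⟩ := T
      simp only [tsum4] at hs
      exact h2 x y z t (by omega)
    have cTY : wsum k fT (q*c) (q*d) ((1-q)*c) ((1-q)*d)
        ≤ wsum k fY (q*c) (q*d) ((1-q)*c) ((1-q)*d) := by
      refine wsum_le_wsum k ?_ wnn1 wnn2 wnn3 wnn4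
      intro T hs
      obtain ⟨x, y, z, t⟩ := T
      simp only [tsum4] at hs
      exact h1 x y z t (by omega)
    -- nonnegativity of the four sums at parameter q (not needed) ; algebra
    set AXq := wsum k fX (q*c) (q*d) ((1-q)*c) ((1-q)*d)
    set AYq := wsum k fY (q*c) (q*d) ((1-q)*c) ((1-q)*d)
    set AZq := wsum k fZ (q*c) (q*d) ((1-q)*c) ((1-q)*d)
    set ATq := wsum k fT (q*c) (q*d) ((1-q)*c) ((1-q)*d)
    set AXp := wsum k fX (p*c) (p*d) ((1-p)*c) ((1-p)*d)
    set AYp := wsum k fY (p*c) (p*d) ((1-p)*c) ((1-p)*d)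
    set AZp := wsum k fZ (p*c) (p*d) ((1-p)*c) ((1-p)*d)
    set ATp := wsum k fT (p*c) (p*d) ((1-p)*c) ((1-p)*d)
    have e1 : 0 ≤ (p-q)*c*(AXq - AZq) :=
      mul_nonneg (mul_nonneg (by linarith) hc) (by linarith)
    have e2 : 0 ≤ (p-q)*d*(AYq - ATq) :=
      mul_nonneg (mul_nonneg (by linarith) hd) (by linarith)
    have e3 : 0 ≤ p*c*(AXp - AXq) := mul_nonneg (mul_nonneg hp0 hc) (by linarith)
    have e4 : 0 ≤ p*d*(AYp - AYq) := mul_nonneg (mul_nonneg hp0 hd) (by linarith)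
    have e5 : 0 ≤ (1-p)*c*(AZp - AZq) :=
      mul_nonneg (mul_nonneg (by linarith) hc) (by linarith)
    have e6 : 0 ≤ (1-p)*d*(ATp - ATq) :=
      mul_nonneg (mul_nonneg (by linarith) hd) (by linarith)
    nlinarith [e1, e2, e3, e4, e5, e6]

lemma pow_split1 (a b : ℝ) (x y z t : ℕ) :
    a ^ (x + 2*y + t) * b ^ (x + 2*z + t)
      = (a*b) ^ x * (a*a) ^ y * (b*b) ^ z * (b*a) ^ t := by
  simp only [two_mul, pow_add, mul_pow]
  ring

lemma pow_split3 (a b : ℝ) (x y z t : ℕ) :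
    a ^ (y + z + 2*t) * b ^ (2*x + y + z)
      = (b*b) ^ x * (b*a) ^ y * (a*b) ^ z * (a*a) ^ t := by
  simp only [two_mul, pow_add, mul_pow]
  ring

/-- For an admissible rule `r` and competence `1/2 < θ < 1`, the probability that `r`
decides positively is the same under the states `P∧¬Q` and `¬P∧Q`, and is at least
the corresponding probability under `¬P∧¬Q`. -/
theorem falsePositive_symmetry_and_bound
    (n m : ℕ) (hm : 1 ≤ m) (hn : n = 2 * m + 1)
    (θ : ℝ) (hθ : 1/2 < θ) (hθ1 : θ < 1)
    (r : ℕ × ℕ × ℕ × ℕ → Fin 2)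
    (hsym : ∀ x y z t : ℕ, x + y + z + t = n → r (x, y, z, t) = r (x, z, y, t))
    (hmono : ∀ T S : ℕ × ℕ × ℕ × ℕ, tsum4 T = n → tsum4 S = n → tableLe T S → r T ≤ r S) :
    (∑ T ∈ (tables n).filter (fun T => r T = 1),
        mcoef n T * θ ^ (T.1 + 2*T.2.1 + T.2.2.2) * (1-θ) ^ (T.1 + 2*T.2.2.1 + T.2.2.2)) =
      (∑ T ∈ (tables n).filter (fun T => r T = 1),
        mcoef n T * θ ^ (T.1 + 2*T.2.2.1 + T.2.2.2) * (1-θ) ^ (T.1 + 2*T.2.1 + T.2.2.2)) ∧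
    (∑ T ∈ (tables n).filter (fun T => r T = 1),
        mcoef n T * θ ^ (T.1 + 2*T.2.1 + T.2.2.2) * (1-θ) ^ (T.1 + 2*T.2.2.1 + T.2.2.2)) ≥
      (∑ T ∈ (tables n).filter (fun T => r T = 1),
        mcoef n T * θ ^ (T.2.1 + T.2.2.1 + 2*T.2.2.2) * (1-θ) ^ (2*T.1 + T.2.1 + T.2.2.1)) := by
  classical
  constructor
  · -- symmetry part
    refine Finset.sum_nbij' (fun T => (T.1, T.2.2.1, T.2.1, T.2.2.2))
      (fun T => (T.1, T.2.2.1, T.2.1, T.2.2.2)) ?_ ?_ ?_ ?_ ?_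
    · intro T hT
      obtain ⟨x, y, z, t⟩ := T
      rw [Finset.mem_filter] at hT ⊢
      obtain ⟨hmem, hr⟩ := hT
      have hs := mem_tables.mp hmem
      simp only [tsum4] at hs
      refine ⟨mem_tables.mpr (by simp [tsum4]; omega), ?_⟩
      simpa using (hsym x y z t (by omega) ▸ hr)
    · intro T hT
      obtain ⟨x, y, z, t⟩ := T
      rw [Finset.mem_filter] at hT ⊢
      obtain ⟨hmem, hr⟩ := hT
      have hs := mem_tables.mp hmem
      simp only [tsum4] at hs
      refine ⟨mem_tables.mpr (by simp [tsum4]; omega), ?_⟩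
      simpa using (hsym x y z t (by omega) ▸ hr)
    · intro T _; rfl
    · intro T _; rfl
    · intro T hT
      obtain ⟨x, y, z, t⟩ := T
      simp only [mcoef]
      ring
  · -- inequality part
    set fI : ℕ × ℕ × ℕ × ℕ → ℝ := fun T => if r T = 1 then (1:ℝ) else 0 with hfI
    have hfI0 : ∀ T, 0 ≤ fI T := by
      intro T; simp only [hfI]; split <;> norm_num
    have hle : ∀ T S : ℕ × ℕ × ℕ × ℕ, r T ≤ r S → fI T ≤ fI S := by
      intro T S h
      simp only [hfI]
      by_cases hT : r T = 1
      · have hS : r S = 1 := by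
          have h1 := Fin.le_def.mp h
          have h2 : (r T).val = 1 := by rw [hT]; rfl
          have h3 := (r S).isLt
          have h4 : (r S).val = 1 := by omega
          exact Fin.ext (by rw [h4]; rfl)
        rw [if_pos hT, if_pos hS]
      · rw [if_neg hT]
        split <;> norm_num
    have h1 : ∀ x y z t : ℕ, x+y+z+t+1 = n → fI (x,y,z,t+1) ≤ fI (x,y+1,z,t) := by
      intro x y z t h
      refine hle _ _ (hmono _ _ (by simp [tsum4]; omega) (by simp [tsum4]; omega) ?_)
      exact Relation.ReflTransGen.single (Or.inr (Or.inl ⟨x, y, z, t, rfl, rfl⟩))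
    have h2 : ∀ x y z t : ℕ, x+y+z+t+1 = n → fI (x,y,z+1,t) ≤ fI (x+1,y,z,t) := by
      intro x y z t h
      refine hle _ _ (hmono _ _ (by simp [tsum4]; omega) (by simp [tsum4]; omega) ?_)
      exact Relation.ReflTransGen.single (Or.inr (Or.inr (Or.inr ⟨x, y, z, t, rfl, rfl⟩)))
    have hc : (0:ℝ) ≤ 1 - θ := by linarith
    have hd : (0:ℝ) ≤ θ := by linarith
    have hkey := key n fI hfI0 h1 h2 (1-θ) θ θ (1-θ) hc hd hc (by linarith) (by linarith)
    have hsimp : (1:ℝ) - (1-θ) = θ := by ring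
    rw [hsimp] at hkey
    have eq1 : (∑ T ∈ (tables n).filter (fun T => r T = 1),
        mcoef n T * θ ^ (T.1 + 2*T.2.1 + T.2.2.2) * (1-θ) ^ (T.1 + 2*T.2.2.1 + T.2.2.2))
        = wsum n fI (θ*(1-θ)) (θ*θ) ((1-θ)*(1-θ)) ((1-θ)*θ) := by
      rw [Finset.sum_filter, wsum]
      refine Finset.sum_congr rfl ?_
      intro T hT
      obtain ⟨x, y, z, t⟩ := T
      simp only [hfI]
      by_cases hr : r (x,y,z,t) = 1
      · simp only [hr, if_pos rfl, mul_one]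
        rw [mul_assoc, pow_split1 θ (1-θ) x y z t]
        simp
      · simp [hr]
    have eq3 : (∑ T ∈ (tables n).filter (fun T => r T = 1),
        mcoef n T * θ ^ (T.2.1 + T.2.2.1 + 2*T.2.2.2) * (1-θ) ^ (2*T.1 + T.2.1 + T.2.2.1))
        = wsum n fI ((1-θ)*(1-θ)) ((1-θ)*θ) (θ*(1-θ)) (θ*θ) := by
      rw [Finset.sum_filter, wsum]
      refine Finset.sum_congr rfl ?_
      intro T hT
      obtain ⟨x, y, z, t⟩ := T
      simp only [hfI]
      by_cases hr : r (x,y,z,t) = 1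
      · simp only [hr, if_pos rfl, mul_one]
        rw [mul_assoc, pow_split3 θ (1-θ) x y z t]
        simp
      · simp [hr]
    rw [ge_iff_le, eq1, eq3]
    exact hkey
end

section
/- For any competence 1/2 < θ < 1 and weight 0 < w < 1, the set of good voting tables is an upper set of the partially ordered set (𝕋, ≤): if T is good and T ≤ S, then S is good. -/
/-- A table `(x,y,z,t)` is good (for competence `θ` and weight `w`) if
`(θ/(1−θ))^{(y−z)−(x−t)} + (θ/(1−θ))^{(z−y)−(x−t)} < 2(1−w)/w`. -/
def goodTable (θ w : ℝ) (T : ℕ × ℕ × ℕ × ℕ) : Prop :=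
  (θ/(1-θ)) ^ (((T.2.1 : ℤ) - T.2.2.1) - ((T.1 : ℤ) - T.2.2.2))
    + (θ/(1-θ)) ^ (((T.2.2.1 : ℤ) - T.2.1) - ((T.1 : ℤ) - T.2.2.2)) < 2*(1-w)/w

lemma aux_left {r C : ℝ} (hr : 1 < r) {a b a' b' : ℤ} (ha : a' = a - 2) (hb : b' = b)
    (h : r ^ a + r ^ b < C) : r ^ a' + r ^ b' < C := by
  subst hb
  refine lt_of_le_of_lt (add_le_add_left ?_ _) h
  exact le_of_lt (zpow_lt_zpow_right₀ hr (by omega))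

lemma aux_right {r C : ℝ} (hr : 1 < r) {a b a' b' : ℤ} (ha : a' = a) (hb : b' = b - 2)
    (h : r ^ a + r ^ b < C) : r ^ a' + r ^ b' < C := by
  subst ha
  refine lt_of_le_of_lt (add_le_add_right ?_ _) h
  exact le_of_lt (zpow_lt_zpow_right₀ hr (by omega))

lemma step_good (θ w : ℝ) (hθ : 1/2 < θ) (hθ1 : θ < 1)
    {T S : ℕ × ℕ × ℕ × ℕ} (hstep : tableStep T S)
    (hT : goodTable θ w T) : goodTable θ w S := by
  have h1θ : (0:ℝ) < 1 - θ := by linarith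
  have hr : 1 < θ / (1 - θ) := by
    rw [lt_div_iff₀ h1θ]; linarith
  rcases hstep with ⟨x, y, z, t, hT', hS'⟩ | ⟨x, y, z, t, hT', hS'⟩ |
    ⟨x, y, z, t, hT', hS'⟩ | ⟨x, y, z, t, hT', hS'⟩ <;>
    subst hT' <;> subst hS' <;>
    unfold goodTable at hT ⊢ <;> dsimp only at hT ⊢
  · exact aux_left hr (by push_cast; ring) (by push_cast; ring) hT
  · exact aux_right hr (by push_cast; ring) (by push_cast; ring) hT
  · exact aux_left hr (by push_cast; ring) (by push_cast; ring) hT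
  · exact aux_right hr (by push_cast; ring) (by push_cast; ring) hT

/-- For any competence `1/2 < θ < 1` and weight `0 < w < 1`, the set of good tables is
an upper set of `(𝕋, ≤)`: if `T` is good and `T ≤ S`, then `S` is good. -/
theorem goodTables_upperSet
    (n m : ℕ) (hm : 1 ≤ m) (hn : n = 2 * m + 1)
    (θ : ℝ) (hθ : 1/2 < θ) (hθ1 : θ < 1)
    (w : ℝ) (hw0 : 0 < w) (hw1 : w < 1) :
    ∀ T S : ℕ × ℕ × ℕ × ℕ, tsum4 T = n → tsum4 S = n →
      goodTable θ w T → tableLe T S → goodTable θ w S := by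
  intro T S h1 h2 hT hle
  clear h1 h2 hn hm
  induction hle with
  | refl => exact hT
  | tail _ hstep ih => exact step_good θ w hθ hθ1 hstep ih
end

section
/- Let ρ and α be integers with 0 < ρ < α. Then the function G_{ρ,α}(η) = η^{−ρ−α} + η^{−ρ+α} on (1,∞) has a unique critical point η* = ((α+ρ)/(α−ρ))^{1/(2α)} ∈ (1,∞), which is its global minimum; G_{ρ,α} is strictly decreasing on (1,η*) and strictly increasing on (η*,∞), and there exists a unique η₀ ∈ (η*,∞) with G_{ρ,α}(η₀) = 2, such that G_{ρ,α}(η) < 2 for η ∈ (1,η₀) and G_{ρ,α}(η) > 2 for η ∈ (η₀,∞). Consequently, at w = 1/2, a voting table with 0 < x − t < |y − z| is assigned the value 1 by the optimal rule when the competence θ satisfies θ < θ₀ := η₀/(1+η₀), and the value 0 when θ > θ₀. -/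
/-- `G_{ρ,α}(η) = η^{−ρ−α} + η^{−ρ+α}`. -/
noncomputable def Gfun (ρ α : ℤ) (η : ℝ) : ℝ := η ^ (-ρ - α) + η ^ (-ρ + α)

lemma my_zpow_lt {x y : ℝ} (n : ℤ) (hn : 0 < n) (hx : 0 < x) (hxy : x < y) : x ^ n < y ^ n := by
  lift n to ℕ using hn.le
  rw [zpow_natCast, zpow_natCast]
  exact pow_lt_pow_left₀ hxy hx.le (by exact_mod_cast hn.ne')

lemma my_zpow_inj {x y : ℝ} (n : ℤ) (hn : 0 < n) (hx : 0 < x) (hy : 0 < y)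
    (h : x ^ n = y ^ n) : x = y := by
  rcases lt_trichotomy x y with hlt | heq | hgt
  · exact absurd h (my_zpow_lt n hn hx hlt).ne
  · exact heq
  · exact absurd h.symm (my_zpow_lt n hn hy hgt).ne

lemma Gfun_diff (ρ α : ℤ) {η : ℝ} (hη : 0 < η) : DifferentiableAt ℝ (Gfun ρ α) η := by
  show DifferentiableAt ℝ (fun η : ℝ => η ^ (-ρ - α) + η ^ (-ρ + α)) η
  exact (differentiableAt_zpow.mpr (Or.inl hη.ne')).add (differentiableAt_zpow.mpr (Or.inl hη.ne'))

lemma Gfun_deriv (ρ α : ℤ) (hρα : ρ < α) {η : ℝ} (hη : 0 < η) :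
    deriv (Gfun ρ α) η
      = η ^ (-ρ - α - 1) * (((α : ℝ) - ρ) * (η ^ (2*α) - ((α : ℝ) + ρ)/((α : ℝ) - ρ))) := by
  have hne : η ≠ 0 := hη.ne'
  have h1 : DifferentiableAt ℝ (fun η : ℝ => η ^ (-ρ - α)) η :=
    differentiableAt_zpow.mpr (Or.inl hne)
  have h2 : DifferentiableAt ℝ (fun η : ℝ => η ^ (-ρ + α)) η :=
    differentiableAt_zpow.mpr (Or.inl hne)
  have h3 : deriv (Gfun ρ α) η = deriv (fun η : ℝ => η ^ (-ρ - α) + η ^ (-ρ + α)) η := rfl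
  rw [h3, deriv_fun_add h1 h2, deriv_zpow, deriv_zpow]
  have key : η ^ (-ρ + α - 1) = η ^ (-ρ - α - 1) * η ^ (2*α) := by
    rw [← zpow_add₀ hne]; ring_nf
  have hαρ : (α : ℝ) - ρ ≠ 0 := by
    have : (ρ : ℝ) < α := by exact_mod_cast hρα
    linarith
  rw [key]
  field_simp
  push_cast
  ring

/-- For integers `0 < ρ < α`, the function `G_{ρ,α}` on `(1,∞)` has a unique critical
point `η* = ((α+ρ)/(α−ρ))^{1/(2α)}`, its global minimum; it is strictly decreasing on
`(1,η*)`, strictly increasing on `(η*,∞)`, and there is a unique `η₀ ∈ (η*,∞)` with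
`G_{ρ,α}(η₀) = 2`; moreover `G_{ρ,α}(η) < 2` on `(1,η₀)` and `> 2` on `(η₀,∞)`.
Consequently, at `w = 1/2`, a voting table with `0 < x − t < |y − z|` is good (value 1
under the optimal rule) exactly when the competence `θ` is below `θ₀ = η₀/(1+η₀)`. -/
theorem Gfun_unique_minimum_and_threshold (ρ α : ℤ) (h0 : 0 < ρ) (hρα : ρ < α) :
    ∃ ηstar η₀ : ℝ,
      ηstar = (((α : ℝ) + (ρ : ℝ)) / ((α : ℝ) - (ρ : ℝ))) ^ ((1 : ℝ) / (2 * (α : ℝ))) ∧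
      1 < ηstar ∧
      (∀ η : ℝ, 1 < η → (deriv (Gfun ρ α) η = 0 ↔ η = ηstar)) ∧
      StrictAntiOn (Gfun ρ α) (Set.Ioo 1 ηstar) ∧
      StrictMonoOn (Gfun ρ α) (Set.Ioi ηstar) ∧
      (∀ η : ℝ, 1 < η → η ≠ ηstar → Gfun ρ α ηstar < Gfun ρ α η) ∧
      ηstar < η₀ ∧
      Gfun ρ α η₀ = 2 ∧
      (∀ η : ℝ, ηstar < η → Gfun ρ α η = 2 → η = η₀) ∧
      (∀ η : ℝ, 1 < η → η < η₀ → Gfun ρ α η < 2) ∧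
      (∀ η : ℝ, η₀ < η → 2 < Gfun ρ α η) ∧
      (∀ θ : ℝ, 1/2 < θ → θ < 1 →
        ∀ x y z t : ℕ, (x : ℤ) - t = ρ → |(y : ℤ) - z| = α →
          (θ < η₀ / (1 + η₀) → goodTable θ (1/2) (x, y, z, t)) ∧
          (η₀ / (1 + η₀) < θ → ¬ goodTable θ (1/2) (x, y, z, t))) := by
  have hρR : (0 : ℝ) < (ρ : ℝ) := by exact_mod_cast h0
  have hραR : (ρ : ℝ) < (α : ℝ) := by exact_mod_cast hρα
  have hαρpos : (0 : ℝ) < (α : ℝ) - ρ := by linarith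
  have hαpos : (0 : ℤ) < α := h0.trans hρα
  have h2α : (0 : ℤ) < 2 * α := by linarith
  set c : ℝ := ((α : ℝ) + ρ) / ((α : ℝ) - ρ) with hc_def
  have hc1 : 1 < c := (one_lt_div hαρpos).mpr (by linarith)
  have hcpos : 0 < c := lt_trans one_pos hc1
  set ηstar : ℝ := c ^ ((1 : ℝ) / (2 * (α : ℝ))) with hstar_def
  have h2αR : (0 : ℝ) < 2 * (α : ℝ) := by positivity
  have hstar1 : 1 < ηstar := by
    rw [hstar_def]
    exact Real.one_lt_rpow_iff_of_pos hcpos |>.mpr (Or.inl ⟨hc1, by positivity⟩)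
  have hstar_pos : 0 < ηstar := lt_trans one_pos hstar1
  have hstar2α : ηstar ^ (2 * α) = c := by
    rw [hstar_def, ← Real.rpow_intCast (c ^ ((1:ℝ)/(2*(α:ℝ)))) (2*α), ← Real.rpow_mul hcpos.le]
    rw [show (1:ℝ)/(2*(α:ℝ)) * ((2*α : ℤ) : ℝ) = 1 by push_cast; field_simp]
    exact Real.rpow_one c
  -- sign of derivative
  have hderiv_neg : ∀ η : ℝ, 1 ≤ η → η < ηstar → deriv (Gfun ρ α) η < 0 := by
    intro η h1 h2
    have hηpos : 0 < η := lt_of_lt_of_le one_pos h1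
    rw [Gfun_deriv ρ α hρα hηpos]
    have : η ^ (2*α) < c := hstar2α ▸ my_zpow_lt (2*α) h2α hηpos h2
    exact mul_neg_of_pos_of_neg (zpow_pos hηpos _)
      (mul_neg_of_pos_of_neg hαρpos (by linarith))
  have hderiv_pos : ∀ η : ℝ, ηstar < η → 0 < deriv (Gfun ρ α) η := by
    intro η h2
    have hηpos : 0 < η := lt_trans hstar_pos h2
    rw [Gfun_deriv ρ α hρα hηpos]
    have : c < η ^ (2*α) := hstar2α ▸ my_zpow_lt (2*α) h2α hstar_pos h2
    exact mul_pos (zpow_pos hηpos _) (mul_pos hαρpos (by linarith))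
  have hcont : ∀ s : Set ℝ, s ⊆ Set.Ioi (0:ℝ) → ContinuousOn (Gfun ρ α) s := by
    intro s hs
    exact fun x hx => (Gfun_diff ρ α (hs hx)).continuousAt.continuousWithinAt
  have hA : StrictAntiOn (Gfun ρ α) (Set.Icc 1 ηstar) := by
    apply strictAntiOn_of_deriv_neg (convex_Icc 1 ηstar)
      (hcont _ (fun x hx => lt_of_lt_of_le one_pos hx.1))
    intro x hx
    rw [interior_Icc] at hx
    exact hderiv_neg x hx.1.le hx.2
  have hM : StrictMonoOn (Gfun ρ α) (Set.Ici ηstar) := by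
    apply strictMonoOn_of_deriv_pos (convex_Ici ηstar)
      (hcont _ (fun x hx => lt_of_lt_of_le hstar_pos hx))
    intro x hx
    rw [interior_Ici] at hx
    exact hderiv_pos x hx
  have hG1 : Gfun ρ α 1 = 2 := by simp [Gfun]; norm_num
  have hGstar_lt2 : Gfun ρ α ηstar < 2 := by
    have := hA ⟨le_refl 1, hstar1.le⟩ ⟨hstar1.le, le_refl ηstar⟩ hstar1
    rwa [hG1] at this
  -- a point where G exceeds 2
  set η₁ : ℝ := max (ηstar + 1) 3 with hη₁_def
  have hη₁_star : ηstar < η₁ := lt_of_lt_of_le (by linarith) (le_max_left _ _)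
  have hη₁3 : (3:ℝ) ≤ η₁ := le_max_right _ _
  have hη₁1 : 1 < η₁ := by linarith
  have hG₁ : 2 < Gfun ρ α η₁ := by
    have hb : (1:ℤ) ≤ -ρ + α := by linarith
    have h1 : η₁ ^ (1:ℤ) ≤ η₁ ^ (-ρ + α) := zpow_le_zpow_right₀ hη₁1.le hb
    rw [zpow_one] at h1
    have h2 : (0:ℝ) < η₁ ^ (-ρ - α) := zpow_pos (by linarith) _
    show (2:ℝ) < η₁ ^ (-ρ - α) + η₁ ^ (-ρ + α)
    linarith
  -- intermediate value
  obtain ⟨η₀, hη₀_mem, hGη₀⟩ : ∃ η₀ ∈ Set.Icc ηstar η₁, Gfun ρ α η₀ = 2 := by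
    have hsub : Set.Icc (Gfun ρ α ηstar) (Gfun ρ α η₁) ⊆ Gfun ρ α '' Set.Icc ηstar η₁ :=
      intermediate_value_Icc hη₁_star.le
        (hcont _ (fun x hx => lt_of_lt_of_le hstar_pos hx.1))
    obtain ⟨η₀, hmem, heq⟩ := hsub ⟨hGstar_lt2.le, hG₁.le⟩
    exact ⟨η₀, hmem, heq⟩
  have hstar_η₀ : ηstar < η₀ := by
    rcases eq_or_lt_of_le hη₀_mem.1 with h | h
    · exfalso; rw [← h] at hGη₀; linarith
    · exact h
  have hη₀1 : 1 < η₀ := lt_trans hstar1 hstar_η₀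
  have hη₀pos : 0 < η₀ := lt_trans one_pos hη₀1
  refine ⟨ηstar, η₀, rfl, hstar1, ?_, hA.mono Set.Ioo_subset_Icc_self,
    hM.mono Set.Ioi_subset_Ici_self, ?_, hstar_η₀, hGη₀, ?_, ?_, ?_, ?_⟩
  · -- critical point iff
    intro η hη
    have hηpos : 0 < η := lt_trans one_pos hη
    rw [Gfun_deriv ρ α hρα hηpos]
    constructor
    · intro h
      rcases mul_eq_zero.mp h with h | h
      · exact absurd h (zpow_pos hηpos _).ne'
      rcases mul_eq_zero.mp h with h | h
      · linarith
      · have : η ^ (2*α) = c := by linarith [sub_eq_zero.mp h]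
        exact my_zpow_inj (2*α) h2α hηpos hstar_pos (this.trans hstar2α.symm)
    · intro h
      rw [h, hstar2α]
      simp [hc_def]
  · -- global minimum
    intro η hη hne
    rcases lt_or_gt_of_ne hne with h | h
    · exact hA ⟨hη.le, h.le⟩ ⟨hstar1.le, le_refl ηstar⟩ h
    · exact hM (Set.mem_Ici.mpr (le_refl ηstar)) (Set.mem_Ici.mpr h.le) h
  · -- uniqueness of η₀
    intro η hη hGη
    exact hM.injOn (Set.mem_Ici.mpr hη.le) (Set.mem_Ici.mpr hstar_η₀.le)
      (hGη.trans hGη₀.symm)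
  · -- G < 2 on (1, η₀)
    intro η hη1 hηη₀
    rcases le_or_gt η ηstar with h | h
    · have := hA ⟨le_refl 1, hstar1.le⟩ ⟨hη1.le, h⟩ hη1
      rw [hG1] at this
      exact this
    · have := hM (Set.mem_Ici.mpr h.le) (Set.mem_Ici.mpr hstar_η₀.le) hηη₀
      rwa [hGη₀] at this
  · -- G > 2 on (η₀, ∞)
    intro η hη
    have := hM (Set.mem_Ici.mpr hstar_η₀.le) (Set.mem_Ici.mpr (hstar_η₀.trans hη).le) hη
    rwa [hGη₀] at this
  · -- voting consequence
    intro θ hθhalf hθ1 x y z t hxt hyz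
    have h1θ : 0 < 1 - θ := by linarith
    set η : ℝ := θ / (1 - θ) with hη_def
    have hη1 : 1 < η := (one_lt_div h1θ).mpr (by linarith)
    have hrhs : 2 * (1 - 1/2) / (1/2 : ℝ) = 2 := by norm_num
    have hαnonneg : (0:ℤ) ≤ α := hαpos.le
    have hsum : (θ/(1-θ)) ^ (((y:ℤ) - z) - ((x:ℤ) - t))
        + (θ/(1-θ)) ^ (((z:ℤ) - y) - ((x:ℤ) - t)) = Gfun ρ α η := by
      rw [hxt]
      rcases abs_eq hαnonneg |>.mp hyz with h | h
      · have hz : (z:ℤ) - y = -α := by linarith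
        rw [h, hz, show (α:ℤ) - ρ = -ρ + α by ring, show -α - ρ = -ρ - α by ring]
        rw [Gfun, add_comm]
      · have hz : (z:ℤ) - y = α := by linarith
        rw [h, hz, show (α:ℤ) - ρ = -ρ + α by ring, show -α - ρ = -ρ - α by ring]
        rw [Gfun]
    have hθiff : θ < η₀ / (1 + η₀) ↔ η < η₀ := by
      rw [lt_div_iff₀ (by linarith : (0:ℝ) < 1 + η₀), hη_def, div_lt_iff₀ h1θ]
      constructor <;> intro h <;> nlinarith
    constructor
    · intro hθlt
      have hηlt : η < η₀ := hθiff.mp hθlt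
      show (θ/(1-θ)) ^ _ + (θ/(1-θ)) ^ _ < 2 * (1 - 1/2) / (1/2 : ℝ)
      rw [hrhs, hsum]
      -- reuse the "< 2" fact proven inline: redo
      rcases le_or_gt η ηstar with h | h
      · have := hA ⟨le_refl 1, hstar1.le⟩ ⟨hη1.le, h⟩ hη1
        rw [hG1] at this; exact this
      · have := hM (Set.mem_Ici.mpr h.le) (Set.mem_Ici.mpr hstar_η₀.le) hηlt
        rwa [hGη₀] at this
    · intro hθgt hgood
      have hηgt : η₀ < η := by
        rw [div_lt_iff₀ (by linarith : (0:ℝ) < 1 + η₀)] at hθgt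
        rw [hη_def, lt_div_iff₀ h1θ]
        nlinarith
      have hbad : Gfun ρ α η < 2 := by
        have := hgood
        rw [goodTable] at this
        simp only at this
        rw [hrhs] at this
        rw [← hsum]
        exact this
      have := hM (Set.mem_Ici.mpr hstar_η₀.le) (Set.mem_Ici.mpr (hstar_η₀.trans hηgt).le) hηgt
      rw [hGη₀] at this
      linarith
end

section
/- Let (X, ≤) be a finite partially ordered set, ∼ an equivalence relation on X, and define the relation ⪯ on the quotient X/∼ by: x̄ ⪯ ȳ if and only if there exist x ∈ x̄ and y ∈ ȳ with x ≤ y. Assume that whenever x̄ ⪯ ȳ, for every x ∈ x̄ there exists y ∈ ȳ with x ≤ y. Then ⪯ is a partial order on X/∼ (in particular it is antisymmetric). -/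
/-- Hallam's lemma: let `(X, ≤)` be a finite poset, `∼` an equivalence relation on `X`,
and define `⪯` on `X/∼` by `x̄ ⪯ ȳ ↔ ∃ x ∈ x̄, ∃ y ∈ ȳ, x ≤ y`.  If whenever `x̄ ⪯ ȳ`,
every `x ∈ x̄` admits some `y ∈ ȳ` with `x ≤ y`, then `⪯` is a partial order on `X/∼`
(reflexive, transitive, and in particular antisymmetric). -/
theorem quotient_partialOrder_of_liftable
    {X : Type*} [Finite X] [PartialOrder X] (s : Setoid X)
    (R : Quotient s → Quotient s → Prop)
    (hR : ∀ p q : Quotient s,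
      R p q ↔ ∃ x y : X, Quotient.mk s x = p ∧ Quotient.mk s y = q ∧ x ≤ y)
    (hyp : ∀ p q : Quotient s, R p q →
      ∀ x : X, Quotient.mk s x = p → ∃ y : X, Quotient.mk s y = q ∧ x ≤ y) :
    (∀ p, R p p) ∧
    (∀ p q r : Quotient s, R p q → R q r → R p r) ∧
    (∀ p q : Quotient s, R p q → R q p → p = q) := by
  refine ⟨?_, ?_, ?_⟩
  · intro p
    obtain ⟨x, hx⟩ := Quotient.exists_rep p
    exact (hR p p).2 ⟨x, x, hx, hx, le_refl x⟩
  · intro p q r hpq hqr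
    obtain ⟨x, y, hx, hy, hxy⟩ := (hR p q).1 hpq
    obtain ⟨z, hz, hyz⟩ := hyp q r hqr y hy
    exact (hR p r).2 ⟨x, z, hx, hz, le_trans hxy hyz⟩
  · intro p q hpq hqp
    obtain ⟨x, hx⟩ := Quotient.exists_rep p
    -- alternating class sequence
    set c : ℕ → Quotient s := fun n => if Even n then p else q with hc
    have key : ∀ n : ℕ, ∀ a : X, Quotient.mk s a = c n →
        ∃ b : X, Quotient.mk s b = c (n + 1) ∧ a ≤ b := by
      intro n a ha
      rcases Nat.even_or_odd n with h | h
      · have h1 : c n = p := by simp [hc, h]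
        have h2 : c (n + 1) = q := by simp [hc, Nat.even_add_one, h]
        rw [h2]; exact hyp p q hpq a (by rw [ha, h1])
      · have h1 : c n = q := by simp [hc, Nat.not_even_iff_odd.2 h]
        have h2 : c (n + 1) = p := by
          simp [hc, Nat.even_add_one, Nat.not_even_iff_odd.2 h]
        rw [h2]; exact hyp q p hqp a (by rw [ha, h1])
    have hc0 : Quotient.mk s x = c 0 := by simpa [hc] using hx
    -- build the chain
    let f : (n : ℕ) → {a : X // Quotient.mk s a = c n} := fun n =>
      Nat.rec ⟨x, hc0⟩
        (fun n ih => ⟨(key n ih.1 ih.2).choose, (key n ih.1 ih.2).choose_spec.1⟩) n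
    have hstep : ∀ n, (f n).1 ≤ (f (n + 1)).1 := fun n =>
      (key n (f n).1 (f n).2).choose_spec.2
    have hmono : Monotone fun n => (f n).1 := monotone_nat_of_le_succ hstep
    obtain ⟨i, j, hij, hfij⟩ :=
      Finite.exists_ne_map_eq_of_infinite (fun n => (f n).1)
    wlog hlt : i < j generalizing i j
    · exact this j i hij.symm hfij.symm (by omega)
    have h1 : (f i).1 ≤ (f (i + 1)).1 := hstep i
    have h2 : (f (i + 1)).1 ≤ (f j).1 := hmono (by omega)
    have heq : (f i).1 = (f (i + 1)).1 :=
      le_antisymm h1 (by rw [← hfij] at h2; exact h2)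
    have hcc : c i = c (i + 1) := by
      rw [← (f i).2, ← (f (i + 1)).2, heq]
    rcases Nat.even_or_odd i with h | h
    · simpa [hc, h, Nat.even_add_one] using hcc
    · have := hcc.symm
      simpa [hc, Nat.not_even_iff_odd.2 h, Nat.even_add_one] using this
end

section
/- Let n = 2m+1 with m ≥ 1, let 0 < w < 1 be the weight and 1/2 < θ < 1 the competence. The premiss-based rule r_pb is optimal — i.e., L_w(r_pb) ≤ L_w(r) for every admissible rule r — if and only if θ ≥ w and θ/(1−θ) + (θ/(1−θ))^{−n} ≥ 2(1−w)/w. -/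
/-- A rule is admissible if it is invariant under transposition and order-preserving. -/
def Admissible (n : ℕ) (r : ℕ × ℕ × ℕ × ℕ → Fin 2) : Prop :=
  (∀ x y z t : ℕ, x + y + z + t = n → r (x, y, z, t) = r (x, z, y, t)) ∧
  (∀ T S : ℕ × ℕ × ℕ × ℕ, tsum4 T = n → tsum4 S = n → tableLe T S → r T ≤ r S)

/-- The loss `L_w(r) = w·ℙ_r(FP) + (1−w)·ℙ_r(FN)`. -/
noncomputable def loss (n : ℕ) (w θ : ℝ) (r : ℕ × ℕ × ℕ × ℕ → Fin 2) : ℝ :=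
  w * ∑ T ∈ (tables n).filter (fun T => r T = 1),
        mcoef n T * θ ^ (T.1 + 2*T.2.1 + T.2.2.2) * (1-θ) ^ (T.1 + 2*T.2.2.1 + T.2.2.2)
  + (1-w) * ∑ T ∈ (tables n).filter (fun T => r T = 0),
        mcoef n T * θ ^ (2*T.1 + T.2.1 + T.2.2.1) * (1-θ) ^ (T.2.1 + T.2.2.1 + 2*T.2.2.2)

/-- The premiss-based rule: decide `C` iff `x+y > z+t` and `x+z > y+t`. -/
def rulePB : ℕ × ℕ × ℕ × ℕ → Fin 2 := fun T =>
  if T.2.2.1 + T.2.2.2 < T.1 + T.2.1 ∧ T.2.1 + T.2.2.2 < T.1 + T.2.2.1 then 1 else 0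

namespace PBopt

variable {n m : ℕ} {w θ : ℝ}

/-! ### Basic objects -/

noncomputable def fA (θ : ℝ) (T : ℕ × ℕ × ℕ × ℕ) : ℝ :=
  θ ^ (T.1 + 2*T.2.1 + T.2.2.2) * (1-θ) ^ (T.1 + 2*T.2.2.1 + T.2.2.2)

noncomputable def fB (θ : ℝ) (T : ℕ × ℕ × ℕ × ℕ) : ℝ :=
  θ ^ (2*T.1 + T.2.1 + T.2.2.1) * (1-θ) ^ (T.2.1 + T.2.2.1 + 2*T.2.2.2)

noncomputable def gg (n : ℕ) (w θ : ℝ) (T : ℕ × ℕ × ℕ × ℕ) : ℝ :=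
  mcoef n T * (w * fA θ T - (1-w) * fB θ T)

def ind (r : ℕ × ℕ × ℕ × ℕ → Fin 2) (T : ℕ × ℕ × ℕ × ℕ) : ℝ :=
  if r T = 1 then 1 else 0

def sw (T : ℕ × ℕ × ℕ × ℕ) : ℕ × ℕ × ℕ × ℕ := (T.1, T.2.2.1, T.2.1, T.2.2.2)

lemma fin2 (a : Fin 2) : a = 0 ∨ a = 1 := by omega

lemma mem_tables {T : ℕ × ℕ × ℕ × ℕ} : T ∈ tables n ↔ tsum4 T = n := by
  obtain ⟨x,y,z,t⟩ := T
  rw [tables, Finset.mem_filter]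
  simp only [Finset.mem_product, Finset.mem_range, tsum4]
  constructor
  · exact fun h => h.2
  · intro h; refine ⟨⟨?_,?_,?_,?_⟩, h⟩ <;> omega

lemma tsum4_sw (T : ℕ × ℕ × ℕ × ℕ) : tsum4 (sw T) = tsum4 T := by
  obtain ⟨x,y,z,t⟩ := T; simp [tsum4, sw]; omega

lemma fB_sw (T : ℕ × ℕ × ℕ × ℕ) : fB θ (sw T) = fB θ T := by
  obtain ⟨x,y,z,t⟩ := T; simp only [fB, sw]; ring_nf

lemma mcoef_sw (T : ℕ × ℕ × ℕ × ℕ) : mcoef n (sw T) = mcoef n T := by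
  obtain ⟨x,y,z,t⟩ := T; simp only [mcoef, sw]; ring_nf

lemma fA_nonneg (hθ : 1/2 < θ) (hθ1 : θ < 1) (T : ℕ × ℕ × ℕ × ℕ) : 0 ≤ fA θ T :=
  mul_nonneg (pow_nonneg (by linarith) _) (pow_nonneg (by linarith) _)

lemma fB_nonneg (hθ : 1/2 < θ) (hθ1 : θ < 1) (T : ℕ × ℕ × ℕ × ℕ) : 0 ≤ fB θ T :=
  mul_nonneg (pow_nonneg (by linarith) _) (pow_nonneg (by linarith) _)

lemma mcoef_pos (T : ℕ × ℕ × ℕ × ℕ) : 0 < mcoef n T := by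
  apply div_pos
  · exact_mod_cast Nat.factorial_pos n
  · have h1 : (0:ℝ) < T.1.factorial := by exact_mod_cast Nat.factorial_pos _
    have h2 : (0:ℝ) < T.2.1.factorial := by exact_mod_cast Nat.factorial_pos _
    have h3 : (0:ℝ) < T.2.2.1.factorial := by exact_mod_cast Nat.factorial_pos _
    have h4 : (0:ℝ) < T.2.2.2.factorial := by exact_mod_cast Nat.factorial_pos _
    positivity

lemma rulePB_sw (T : ℕ × ℕ × ℕ × ℕ) : rulePB (sw T) = rulePB T := by
  obtain ⟨x,y,z,t⟩ := T
  simp only [rulePB, sw]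
  exact if_congr (by constructor <;> (rintro ⟨h1,h2⟩; exact ⟨h2,h1⟩)) rfl rfl

lemma rulePB_eq_one {T : ℕ × ℕ × ℕ × ℕ} :
    rulePB T = 1 ↔ (T.2.2.1 + T.2.2.2 < T.1 + T.2.1 ∧ T.2.1 + T.2.2.2 < T.1 + T.2.2.1) := by
  unfold rulePB
  split <;> rename_i h
  · exact iff_of_true rfl h
  · exact iff_of_false (by decide) h

lemma rulePB_eq_zero {T : ℕ × ℕ × ℕ × ℕ} :
    rulePB T = 0 ↔ ¬(T.2.2.1 + T.2.2.2 < T.1 + T.2.1 ∧ T.2.1 + T.2.2.2 < T.1 + T.2.2.1) := by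
  rcases fin2 (rulePB T) with h | h
  · simp only [h, true_iff]
    intro hc
    have := rulePB_eq_one.mpr hc
    rw [h] at this; exact absurd this (by decide)
  · simp only [h]
    constructor
    · intro h0; exact absurd h0.symm (by decide)
    · intro hc; exact absurd (rulePB_eq_one.mp h) hc

/-! ### Key pointwise inequalities -/

lemma wA_le (hw0 : 0 < w) (hθ : 1/2 < θ) (hθ1 : θ < 1) (hwθ : w ≤ θ)
    (T : ℕ × ℕ × ℕ × ℕ) (h1 : T.2.1 + T.2.2.2 < T.1 + T.2.2.1) :
    w * fA θ T ≤ (1-w) * fB θ T := by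
  obtain ⟨x,y,z,t⟩ := T
  simp only [fA, fB, sw] at *
  obtain ⟨k, hk1, e1, e2⟩ : ∃ k, 1 ≤ k ∧ 2*x+y+z = (x+2*y+t) + k ∧ x+2*z+t = (y+z+2*t) + k :=
    ⟨x+z-(y+t), by omega, by omega, by omega⟩
  have hθ0 : (0:ℝ) ≤ θ := by linarith
  have h1θ : (0:ℝ) ≤ 1-θ := by linarith
  have hbase : (0:ℝ) ≤ θ ^ (x+2*y+t) * (1-θ) ^ (y+z+2*t) :=
    mul_nonneg (pow_nonneg hθ0 _) (pow_nonneg h1θ _)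
  have hP1 : w * (1-θ)^k ≤ (1-w) * θ^k := by
    obtain ⟨k, rfl⟩ : ∃ j, k = j + 1 := ⟨k-1, by omega⟩
    rw [pow_succ, pow_succ]
    have ha : (1-θ)^k ≤ θ^k := pow_le_pow_left₀ h1θ (by linarith) k
    have hb : w * (1-θ) ≤ (1-w) * θ := by nlinarith
    calc w * ((1-θ)^k * (1-θ)) = (w * (1-θ)) * (1-θ)^k := by ring
      _ ≤ (w * (1-θ)) * θ^k := mul_le_mul_of_nonneg_left ha (by positivity)
      _ ≤ ((1-w) * θ) * θ^k := mul_le_mul_of_nonneg_right hb (pow_nonneg hθ0 k)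
      _ = (1-w) * (θ^k * θ) := by ring
  calc w * (θ^(x+2*y+t) * (1-θ)^(x+2*z+t))
      = w * (θ^(x+2*y+t) * (1-θ)^((y+z+2*t)+k)) := by rw [← e2]
    _ = (θ^(x+2*y+t) * (1-θ)^(y+z+2*t)) * (w * (1-θ)^k) := by ring
    _ ≤ (θ^(x+2*y+t) * (1-θ)^(y+z+2*t)) * ((1-w) * θ^k) := mul_le_mul_of_nonneg_left hP1 hbase
    _ = (1-w) * (θ^((x+2*y+t)+k) * (1-θ)^(y+z+2*t)) := by ring
    _ = (1-w) * (θ^(2*x+y+z) * (1-θ)^(y+z+2*t)) := by rw [← e1]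

lemma wA_gt (hw1 : w < 1) (hθ : 1/2 < θ) (hθ1 : θ < 1) (hwθ : θ < w)
    (T : ℕ × ℕ × ℕ × ℕ) (h1 : T.2.1 + T.2.2.2 + 1 = T.1 + T.2.2.1) :
    (1-w) * fB θ T < w * fA θ T := by
  obtain ⟨x,y,z,t⟩ := T
  simp only [fA, fB] at *
  have e1 : 2*x+y+z = (x+2*y+t) + 1 := by omega
  have e2 : x+2*z+t = (y+z+2*t) + 1 := by omega
  have hθ0 : (0:ℝ) < θ := by linarith
  have h1θ : (0:ℝ) < 1-θ := by linarith
  have hbase : (0:ℝ) < θ ^ (x+2*y+t) * (1-θ) ^ (y+z+2*t) :=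
    mul_pos (pow_pos hθ0 _) (pow_pos h1θ _)
  have hb : (1-w) * θ < w * (1-θ) := by nlinarith
  calc (1-w) * (θ^(2*x+y+z) * (1-θ)^(y+z+2*t))
      = (1-w) * (θ^((x+2*y+t)+1) * (1-θ)^(y+z+2*t)) := by rw [← e1]
    _ = (θ^(x+2*y+t) * (1-θ)^(y+z+2*t)) * ((1-w) * θ) := by ring
    _ < (θ^(x+2*y+t) * (1-θ)^(y+z+2*t)) * (w * (1-θ)) := by
        exact mul_lt_mul_of_pos_left hb hbase
    _ = w * (θ^(x+2*y+t) * (1-θ)^((y+z+2*t)+1)) := by ring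
    _ = w * (θ^(x+2*y+t) * (1-θ)^(x+2*z+t)) := by rw [← e2]

lemma Q1 (hθ : 1/2 < θ) (hθ1 : θ < 1)
    (T : ℕ × ℕ × ℕ × ℕ) (h1 : T.1 + T.2.2.1 < T.2.1 + T.2.2.2) :
    θ * fB θ T ≤ (1-θ) * fA θ T := by
  obtain ⟨x,y,z,t⟩ := T
  simp only [fA, fB] at *
  obtain ⟨l, hl1, e1, e2⟩ : ∃ l, 1 ≤ l ∧ x+2*y+t = (2*x+y+z) + l ∧ y+z+2*t = (x+2*z+t) + l :=
    ⟨y+t-(x+z), by omega, by omega, by omega⟩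
  have hθ0 : (0:ℝ) ≤ θ := by linarith
  have h1θ : (0:ℝ) ≤ 1-θ := by linarith
  have hbase : (0:ℝ) ≤ θ ^ (2*x+y+z) * (1-θ) ^ (x+2*z+t) :=
    mul_nonneg (pow_nonneg hθ0 _) (pow_nonneg h1θ _)
  have hP2 : θ * (1-θ)^l ≤ (1-θ) * θ^l := by
    obtain ⟨l, rfl⟩ : ∃ j, l = j + 1 := ⟨l-1, by omega⟩
    rw [pow_succ, pow_succ]
    have ha : (1-θ)^l ≤ θ^l := pow_le_pow_left₀ h1θ (by linarith) l
    calc θ * ((1-θ)^l * (1-θ)) = (θ * (1-θ)) * (1-θ)^l := by ring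
      _ ≤ (θ * (1-θ)) * θ^l := mul_le_mul_of_nonneg_left ha (by positivity)
      _ = (1-θ) * (θ^l * θ) := by ring
  calc θ * (θ^(2*x+y+z) * (1-θ)^(y+z+2*t))
      = θ * (θ^(2*x+y+z) * (1-θ)^((x+2*z+t)+l)) := by rw [← e2]
    _ = (θ^(2*x+y+z) * (1-θ)^(x+2*z+t)) * (θ * (1-θ)^l) := by ring
    _ ≤ (θ^(2*x+y+z) * (1-θ)^(x+2*z+t)) * ((1-θ) * θ^l) := mul_le_mul_of_nonneg_left hP2 hbase
    _ = (1-θ) * (θ^((2*x+y+z)+l) * (1-θ)^(x+2*z+t)) := by ring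
    _ = (1-θ) * (θ^(x+2*y+t) * (1-θ)^(x+2*z+t)) := by rw [← e1]

lemma Q2 (hθ : 1/2 < θ) (hθ1 : θ < 1)
    (T : ℕ × ℕ × ℕ × ℕ) (hT : tsum4 T = n) :
    (1-θ)^n * fB θ T ≤ θ^n * fA θ T := by
  obtain ⟨x,y,z,t⟩ := T
  simp only [fA, fB, tsum4] at *
  have hθ0 : (0:ℝ) ≤ θ := by linarith
  have h1θ : (0:ℝ) ≤ 1-θ := by linarith
  have e1 : n + (x+2*y+t) = (2*x+y+z) + 2*(y+t) := by omega
  have e2 : n + (y+z+2*t) = (x+2*z+t) + 2*(y+t) := by omega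
  have ha : (1-θ)^(2*(y+t)) ≤ θ^(2*(y+t)) := pow_le_pow_left₀ h1θ (by linarith) _
  have hbase : (0:ℝ) ≤ θ ^ (2*x+y+z) * (1-θ) ^ (x+2*z+t) :=
    mul_nonneg (pow_nonneg hθ0 _) (pow_nonneg h1θ _)
  calc (1-θ)^n * (θ^(2*x+y+z) * (1-θ)^(y+z+2*t))
      = θ^(2*x+y+z) * (1-θ)^(n + (y+z+2*t)) := by ring
    _ = θ^(2*x+y+z) * (1-θ)^((x+2*z+t) + 2*(y+t)) := by rw [e2]
    _ = (θ^(2*x+y+z) * (1-θ)^(x+2*z+t)) * (1-θ)^(2*(y+t)) := by ring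
    _ ≤ (θ^(2*x+y+z) * (1-θ)^(x+2*z+t)) * θ^(2*(y+t)) := mul_le_mul_of_nonneg_left ha hbase
    _ = θ^((2*x+y+z) + 2*(y+t)) * (1-θ)^(x+2*z+t) := by ring
    _ = θ^(n + (x+2*y+t)) * (1-θ)^(x+2*z+t) := by rw [e1]
    _ = θ^n * (θ^(x+2*y+t) * (1-θ)^(x+2*z+t)) := by ring

/-- Combination lemma: from `θ·b ≤ (1−θ)·a`, `(1−θ)^n·b ≤ θ^n·a'` and condition 2
we get `2(1−w)·b ≤ w(a+a')`. -/
lemma comb (hw0 : 0 < w) (hθ : 1/2 < θ) (hθ1 : θ < 1)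
    (hc2 : 2*(1-w)*(θ^n*(1-θ)) ≤ w*(θ^(n+1) + (1-θ)^(n+1)))
    {a a' b : ℝ} (ha : 0 ≤ a) (ha' : 0 ≤ a') (hb : 0 ≤ b)
    (h1 : θ * b ≤ (1-θ) * a) (h2 : (1-θ)^n * b ≤ θ^n * a') :
    2*(1-w)*b ≤ w*(a+a') := by
  have hθ0 : (0:ℝ) < θ := by linarith
  have h1θ : (0:ℝ) < 1-θ := by linarith
  have hm1 : w*θ^n*(θ*b) ≤ w*θ^n*((1-θ)*a) :=
    mul_le_mul_of_nonneg_left h1 (by positivity)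
  have hm2 : w*(1-θ)*((1-θ)^n*b) ≤ w*(1-θ)*(θ^n*a') :=
    mul_le_mul_of_nonneg_left h2 (by positivity)
  have hm3 : (2*(1-w)*(θ^n*(1-θ)))*b ≤ (w*(θ^(n+1)+(1-θ)^(n+1)))*b :=
    mul_le_mul_of_nonneg_right hc2 hb
  have e : θ^(n+1) = θ^n*θ := pow_succ θ n
  have e' : (1-θ)^(n+1) = (1-θ)^n*(1-θ) := pow_succ (1-θ) n
  rw [e, e'] at hm3
  have final : (2*(1-w)*b)*(θ^n*(1-θ)) ≤ (w*(a+a'))*(θ^n*(1-θ)) := by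
    ring_nf at hm1 hm2 hm3 ⊢
    linarith
  exact le_of_mul_le_mul_right final (by positivity)

/-- Core inequality for tables outside the PB acceptance set. -/
lemma S2 (hn : n = 2*m+1) (hw0 : 0 < w) (hθ : 1/2 < θ) (hθ1 : θ < 1)
    (hc2 : 2*(1-w)*(θ^n*(1-θ)) ≤ w*(θ^(n+1) + (1-θ)^(n+1)))
    (T : ℕ × ℕ × ℕ × ℕ) (hT : tsum4 T = n)
    (hpb : ¬(T.2.2.1 + T.2.2.2 < T.1 + T.2.1 ∧ T.2.1 + T.2.2.2 < T.1 + T.2.2.1)) :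
    2*(1-w) * fB θ T ≤ w * (fA θ T + fA θ (sw T)) := by
  have hTs : tsum4 (sw T) = n := by rw [tsum4_sw]; exact hT
  have hA := fA_nonneg hθ hθ1 T
  have hA' := fA_nonneg hθ hθ1 (sw T)
  have hB := fB_nonneg hθ hθ1 T
  have hsplit : T.1 + T.2.2.1 < T.2.1 + T.2.2.2 ∨ T.1 + T.2.1 < T.2.2.1 + T.2.2.2 := by
    obtain ⟨x,y,z,t⟩ := T
    simp only [tsum4] at hT
    simp only [not_and_or, not_lt] at hpb
    dsimp only at hpb hT ⊢
    omega
  rcases hsplit with hk | hj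
  · -- second-premiss margin negative
    have h1 := Q1 hθ hθ1 T hk
    have h2 := Q2 (n := n) hθ hθ1 (sw T) hTs
    rw [fB_sw] at h2
    exact comb hw0 hθ hθ1 hc2 hA hA' hB h1 h2
  · -- first-premiss margin negative: use the transposed table
    have hk' : (sw T).1 + (sw T).2.2.1 < (sw T).2.1 + (sw T).2.2.2 := by
      obtain ⟨x,y,z,t⟩ := T; simpa [sw] using hj
    have h1 := Q1 hθ hθ1 (sw T) hk'
    rw [fB_sw] at h1
    have h2 := Q2 (n := n) hθ hθ1 T hT
    have := comb hw0 hθ hθ1 hc2 hA' hA hB h1 h2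
    linarith

/-! ### Loss decomposition -/

lemma loss_eq (r : ℕ × ℕ × ℕ × ℕ → Fin 2) :
    loss n w θ r = (1-w) * ∑ T ∈ tables n, mcoef n T * fB θ T
      + ∑ T ∈ tables n, ind r T * gg n w θ T := by
  unfold loss
  rw [Finset.sum_filter, Finset.sum_filter, Finset.mul_sum, Finset.mul_sum,
    Finset.mul_sum, ← Finset.sum_add_distrib, ← Finset.sum_add_distrib]
  apply Finset.sum_congr rfl
  intro T _
  rcases fin2 (r T) with h | h <;>
    simp only [ind, gg, fA, fB, h, if_pos rfl, ite_true, ite_false,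
      if_neg (show ¬(0:Fin 2) = 1 by decide), if_neg (show ¬(1:Fin 2) = 0 by decide)] <;>
    ring

lemma loss_diff (r r' : ℕ × ℕ × ℕ × ℕ → Fin 2) :
    loss n w θ r - loss n w θ r'
      = ∑ T ∈ tables n, (ind r T - ind r' T) * gg n w θ T := by
  calc loss n w θ r - loss n w θ r'
      = ∑ T ∈ tables n, ind r T * gg n w θ T - ∑ T ∈ tables n, ind r' T * gg n w θ T := by
        rw [loss_eq r, loss_eq r']; ring
    _ = ∑ T ∈ tables n, (ind r T * gg n w θ T - ind r' T * gg n w θ T) :=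
        (Finset.sum_sub_distrib _ _).symm
    _ = ∑ T ∈ tables n, (ind r T - ind r' T) * gg n w θ T :=
        Finset.sum_congr rfl (fun T _ => by ring)

noncomputable def swE : (ℕ×ℕ×ℕ×ℕ) ≃ (ℕ×ℕ×ℕ×ℕ) := ⟨sw, sw, fun _ => rfl, fun _ => rfl⟩

lemma sum_sw (f : ℕ×ℕ×ℕ×ℕ → ℝ) : ∑ T ∈ tables n, f (sw T) = ∑ T ∈ tables n, f T := by
  apply Finset.sum_equiv swE
  · intro T
    simp only [mem_tables, swE, Equiv.coe_fn_mk, tsum4_sw]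
    show tsum4 T = n ↔ tsum4 (sw T) = n; rw [tsum4_sw]
  · intro T _; rfl

/-! ### Sufficiency -/

lemma sufficiency (hn : n = 2*m+1) (hw0 : 0 < w) (hw1 : w < 1)
    (hθ : 1/2 < θ) (hθ1 : θ < 1) (hwθ : w ≤ θ)
    (hc2 : 2*(1-w)*(θ^n*(1-θ)) ≤ w*(θ^(n+1) + (1-θ)^(n+1)))
    (r : ℕ × ℕ × ℕ × ℕ → Fin 2)
    (hsym : ∀ x y z t : ℕ, x + y + z + t = n → r (x, y, z, t) = r (x, z, y, t)) :
    loss n w θ rulePB ≤ loss n w θ r := by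
  have key : 0 ≤ ∑ T ∈ tables n, (ind r T - ind rulePB T) * gg n w θ T := by
    set D : ℕ×ℕ×ℕ×ℕ → ℝ := fun T => (ind r T - ind rulePB T) * gg n w θ T with hD
    have hsw : ∑ T ∈ tables n, D (sw T) = ∑ T ∈ tables n, D T := sum_sw D
    have h2 : (2:ℝ) * ∑ T ∈ tables n, D T = ∑ T ∈ tables n, (D T + D (sw T)) := by
      rw [Finset.sum_add_distrib, hsw]; ring
    have hterm : ∀ T ∈ tables n, 0 ≤ D T + D (sw T) := by
      intro T hT
      have hsum : tsum4 T = n := mem_tables.mp hT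
      have hr : r (sw T) = r T := by
        obtain ⟨x,y,z,t⟩ := T
        exact (hsym x y z t (by simpa [tsum4] using hsum)).symm
      have hpbsw : rulePB (sw T) = rulePB T := rulePB_sw T
      have hDsum : D T + D (sw T)
          = (ind r T - ind rulePB T) * (mcoef n T * (w * (fA θ T + fA θ (sw T)) - 2*(1-w) * fB θ T)) := by
        simp only [hD, ind, gg, hr, hpbsw, mcoef_sw, fB_sw]
        ring
      rw [hDsum]
      have hM : 0 ≤ mcoef n T := le_of_lt (mcoef_pos T)
      rcases fin2 (r T) with hr0 | hr1
      · rcases fin2 (rulePB T) with hp0 | hp1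
        · simp [ind, hr0, hp0]
        · -- r = 0, pb = 1 : bracket is ≤ 0
          have hc := rulePB_eq_one.mp hp1
          have e1 : w * fA θ T ≤ (1-w) * fB θ T := wA_le hw0 hθ hθ1 hwθ T hc.2
          have hcsw : rulePB (sw T) = 1 := by rw [hpbsw]; exact hp1
          have e2 : w * fA θ (sw T) ≤ (1-w) * fB θ (sw T) := by
            apply wA_le hw0 hθ hθ1 hwθ (sw T)
            have := (rulePB_eq_one.mp hcsw).2
            exact this
          rw [fB_sw] at e2
          have hbr : w * (fA θ T + fA θ (sw T)) - 2*(1-w) * fB θ T ≤ 0 := by linarith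
          have : 0 ≤ mcoef n T * (-(w * (fA θ T + fA θ (sw T)) - 2*(1-w) * fB θ T)) :=
            mul_nonneg hM (by linarith)
          simp only [ind, hr0, hp1, if_pos rfl, ite_true,
            if_neg (show ¬(0:Fin 2) = 1 by decide)]
          nlinarith
      · rcases fin2 (rulePB T) with hp0 | hp1
        · -- r = 1, pb = 0 : bracket is ≥ 0
          have hc := rulePB_eq_zero.mp hp0
          have hbr : 0 ≤ w * (fA θ T + fA θ (sw T)) - 2*(1-w) * fB θ T := by
            have := S2 (m := m) hn hw0 hθ hθ1 hc2 T hsum hc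
            linarith
          have : 0 ≤ mcoef n T * (w * (fA θ T + fA θ (sw T)) - 2*(1-w) * fB θ T) :=
            mul_nonneg hM hbr
          simp only [ind, hr1, hp0, if_pos rfl, ite_true,
            if_neg (show ¬(0:Fin 2) = 1 by decide)]
          nlinarith
        · simp [ind, hr1, hp1]
    have hpos : 0 ≤ ∑ T ∈ tables n, (D T + D (sw T)) := Finset.sum_nonneg hterm
    linarith
  have := loss_diff (n := n) (w := w) (θ := θ) r rulePB
  linarith

/-! ### Monotonicity machinery -/

def pbcond (T : ℕ × ℕ × ℕ × ℕ) : Prop :=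
  T.2.2.1 + T.2.2.2 < T.1 + T.2.1 ∧ T.2.1 + T.2.2.2 < T.1 + T.2.2.1

instance : DecidablePred pbcond := fun _ => instDecidableAnd

lemma rulePB_def (T : ℕ × ℕ × ℕ × ℕ) : rulePB T = if pbcond T then 1 else 0 := rfl

lemma fin2_ite_one {p : Prop} [Decidable p] : (if p then (1:Fin 2) else 0) = 1 ↔ p := by
  split <;> rename_i h
  · exact iff_of_true rfl h
  · exact iff_of_false (by decide) h

lemma fin2_ite_zero {p : Prop} [Decidable p] : (if p then (1:Fin 2) else 0) = 0 ↔ ¬p := by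
  split <;> rename_i h
  · exact iff_of_false (by decide) (not_not_intro h)
  · exact iff_of_true rfl h

lemma ite_rule_le {p q : Prop} [Decidable p] [Decidable q] (h : p → q) :
    (if p then (1:Fin 2) else 0) ≤ (if q then (1:Fin 2) else 0) := by
  by_cases hp : p
  · rw [if_pos hp, if_pos (h hp)]
  · rw [if_neg hp]; exact Fin.zero_le _

lemma pb_step {T S : ℕ × ℕ × ℕ × ℕ} (h : tableStep T S) (hp : pbcond T) : pbcond S := by
  rcases h with ⟨x,y,z,t,rfl,rfl⟩|⟨x,y,z,t,rfl,rfl⟩|⟨x,y,z,t,rfl,rfl⟩|⟨x,y,z,t,rfl,rfl⟩ <;>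
    (unfold pbcond at *; dsimp only at *; omega)

lemma pb_le {T S : ℕ × ℕ × ℕ × ℕ} (h : tableLe T S) (hp : pbcond T) : pbcond S := by
  induction h with
  | refl => exact hp
  | tail _ hstep ih => exact pb_step hstep ih

/-! ### The rule used to show necessity of `w ≤ θ` -/

def cond3 (T : ℕ × ℕ × ℕ × ℕ) : Prop :=
  T.2.2.1 + T.2.2.2 < T.1 + T.2.1 ∧ T.2.1 + T.2.2.2 < T.1 + T.2.2.1 ∧
    (T.2.2.1 + T.2.2.2 + 3 ≤ T.1 + T.2.1 ∨ T.2.1 + T.2.2.2 + 3 ≤ T.1 + T.2.2.1)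

instance : DecidablePred cond3 := fun _ => instDecidableAnd

def rule3 : ℕ × ℕ × ℕ × ℕ → Fin 2 := fun T => if cond3 T then 1 else 0

lemma cond3_step {T S : ℕ × ℕ × ℕ × ℕ} (h : tableStep T S) (hp : cond3 T) : cond3 S := by
  rcases h with ⟨x,y,z,t,rfl,rfl⟩|⟨x,y,z,t,rfl,rfl⟩|⟨x,y,z,t,rfl,rfl⟩|⟨x,y,z,t,rfl,rfl⟩ <;>
    (unfold cond3 at *; dsimp only at *; omega)

lemma cond3_le {T S : ℕ × ℕ × ℕ × ℕ} (h : tableLe T S) (hp : cond3 T) : cond3 S := by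
  induction h with
  | refl => exact hp
  | tail _ hstep ih => exact cond3_step hstep ih

lemma adm3 : Admissible n rule3 := by
  constructor
  · intro x y z t _
    simp only [rule3]
    apply if_congr ?_ rfl rfl
    unfold cond3; dsimp only
    constructor <;> (rintro ⟨h1, h2, h3⟩; exact ⟨h2, h1, h3.symm⟩)
  · intro T S _ _ hle
    exact ite_rule_le (cond3_le hle)

lemma nec1 (hn : n = 2*m+1) (hw0 : 0 < w) (hw1 : w < 1) (hθ : 1/2 < θ) (hθ1 : θ < 1)
    (hopt : loss n w θ rulePB ≤ loss n w θ rule3) : w ≤ θ := by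
  by_contra hlt
  push_neg at hlt
  have hdiff := loss_diff (n := n) (w := w) (θ := θ) rulePB rule3
  have hpos : 0 < ∑ T ∈ tables n, (ind rulePB T - ind rule3 T) * gg n w θ T := by
    apply Finset.sum_pos'
    · intro T hT
      have hsum := mem_tables.mp hT
      rcases fin2 (rulePB T) with hp | hp
      · have h3 : rule3 T = 0 := by
          rw [rule3, fin2_ite_zero]
          intro hc
          exact (rulePB_eq_zero.mp hp) ⟨hc.1, hc.2.1⟩
        simp [ind, hp, h3, show ¬(0:Fin 2) = 1 by decide]
      · rcases fin2 (rule3 T) with h3 | h3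
        · have hc := rulePB_eq_one.mp hp
          have hnc : ¬ cond3 T := by rwa [rule3, fin2_ite_zero] at h3
          have hk : T.2.1 + T.2.2.2 + 1 = T.1 + T.2.2.1 := by
            obtain ⟨x,y,z,t⟩ := T
            unfold cond3 at hnc
            unfold tsum4 at hsum
            dsimp only at *
            omega
          have hAB := wA_gt hw1 hθ hθ1 hlt T hk
          have hgg : 0 < gg n w θ T := by
            apply mul_pos (mcoef_pos T)
            linarith
          simp only [ind, hp, h3, if_pos rfl, ite_true,
            if_neg (show ¬(0:Fin 2) = 1 by decide)]
          nlinarith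
        · simp [ind, hp, h3]
    · refine ⟨(1, m, m, 0), mem_tables.mpr (by show 1 + m + m + 0 = n; omega), ?_⟩
      have hp : rulePB (1, m, m, 0) = 1 := by
        rw [rulePB_def, fin2_ite_one]
        show m + 0 < 1 + m ∧ m + 0 < 1 + m; omega
      have h3 : rule3 (1, m, m, 0) = 0 := by
        rw [rule3, fin2_ite_zero]
        show ¬(m + 0 < 1 + m ∧ m + 0 < 1 + m ∧ (m + 0 + 3 ≤ 1 + m ∨ m + 0 + 3 ≤ 1 + m)); omega
      have hAB := wA_gt hw1 hθ hθ1 hlt (1, m, m, 0) (by show m + 0 + 1 = 1 + m; omega)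
      have hgg : 0 < gg n w θ (1, m, m, 0) := by
        apply mul_pos (mcoef_pos _)
        linarith
      simp only [ind, hp, h3, if_pos rfl, ite_true,
        if_neg (show ¬(0:Fin 2) = 1 by decide)]
      nlinarith
  linarith

/-! ### The rule used to show necessity of condition 2 -/

def cond1 (m : ℕ) (T : ℕ × ℕ × ℕ × ℕ) : Prop :=
  pbcond T ∨ T = (m, m+1, 0, 0) ∨ T = (m, 0, m+1, 0)

instance (m : ℕ) : DecidablePred (cond1 m) := fun _ => instDecidableOr

def rule1 (m : ℕ) : ℕ × ℕ × ℕ × ℕ → Fin 2 := fun T => if cond1 m T then 1 else 0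

lemma adm1 : Admissible n (rule1 m) := by
  constructor
  · intro x y z t _
    simp only [rule1]
    apply if_congr ?_ rfl rfl
    unfold cond1 pbcond
    simp only [Prod.mk.injEq]
    constructor <;> (rintro (⟨h1,h2⟩ | h | h)) <;> tauto
  · intro T S _ _ hle
    apply ite_rule_le
    intro hc
    rcases hc with hpb | heq | heq
    · exact Or.inl (pb_le hle hpb)
    · subst heq
      rcases Relation.ReflTransGen.cases_head hle with heq2 | ⟨T', hstep, hle'⟩
      · rw [← heq2]; exact Or.inr (Or.inl rfl)
      · refine Or.inl (pb_le hle' ?_)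
        rcases hstep with ⟨x,y,z,t,he,rfl⟩|⟨x,y,z,t,he,rfl⟩|⟨x,y,z,t,he,rfl⟩|⟨x,y,z,t,he,rfl⟩ <;>
          (simp only [Prod.mk.injEq] at he; unfold pbcond; dsimp only; omega)
    · subst heq
      rcases Relation.ReflTransGen.cases_head hle with heq2 | ⟨T', hstep, hle'⟩
      · rw [← heq2]; exact Or.inr (Or.inr rfl)
      · refine Or.inl (pb_le hle' ?_)
        rcases hstep with ⟨x,y,z,t,he,rfl⟩|⟨x,y,z,t,he,rfl⟩|⟨x,y,z,t,he,rfl⟩|⟨x,y,z,t,he,rfl⟩ <;>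
          (simp only [Prod.mk.injEq] at he; unfold pbcond; dsimp only; omega)

lemma nec2 (hn : n = 2*m+1) (hw0 : 0 < w) (hw1 : w < 1) (hθ : 1/2 < θ) (hθ1 : θ < 1)
    (hopt : loss n w θ rulePB ≤ loss n w θ (rule1 m)) :
    2*(1-w)*(θ^n*(1-θ)) ≤ w*(θ^(n+1) + (1-θ)^(n+1)) := by
  by_contra hcc
  push_neg at hcc
  have hdiff := loss_diff (n := n) (w := w) (θ := θ) (rule1 m) rulePB
  have hne : ((m, m+1, 0, 0) : ℕ×ℕ×ℕ×ℕ) ≠ (m, 0, m+1, 0) := by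
    simp only [ne_eq, Prod.mk.injEq]; omega
  have hsub : ({(m, m+1, 0, 0), (m, 0, m+1, 0)} : Finset (ℕ×ℕ×ℕ×ℕ)) ⊆ tables n := by
    intro T hT
    rw [Finset.mem_insert, Finset.mem_singleton] at hT
    rw [mem_tables]
    rcases hT with rfl | rfl
    · show m + (m+1) + 0 + 0 = n; omega
    · show m + 0 + (m+1) + 0 = n; omega
  have hzero : ∀ T ∈ tables n, T ∉ ({(m, m+1, 0, 0), (m, 0, m+1, 0)} : Finset (ℕ×ℕ×ℕ×ℕ)) →
      (ind (rule1 m) T - ind rulePB T) * gg n w θ T = 0 := by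
    intro T _ hnm
    rw [Finset.mem_insert, Finset.mem_singleton] at hnm
    push_neg at hnm
    have he : rule1 m T = rulePB T := by
      rw [rule1, rulePB_def]
      apply if_congr ?_ rfl rfl
      unfold cond1
      constructor
      · rintro (h | h | h)
        · exact h
        · exact absurd h hnm.1
        · exact absurd h hnm.2
      · exact Or.inl
    rw [ind, ind, he]; ring
  have hr1T1 : rule1 m (m, m+1, 0, 0) = 1 := by
    rw [rule1, fin2_ite_one]; exact Or.inr (Or.inl rfl)
  have hr1T2 : rule1 m (m, 0, m+1, 0) = 1 := by
    rw [rule1, fin2_ite_one]; exact Or.inr (Or.inr rfl)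
  have hpbT1 : rulePB (m, m+1, 0, 0) = 0 := by
    rw [rulePB_def, fin2_ite_zero]
    show ¬((0:ℕ) + 0 < m + (m+1) ∧ m + 1 + 0 < m + 0); omega
  have hpbT2 : rulePB (m, 0, m+1, 0) = 0 := by
    rw [rulePB_def, fin2_ite_zero]
    show ¬((m:ℕ) + 1 + 0 < m + 0 ∧ 0 + 0 < m + (m+1)); omega
  have hsum_eq : ∑ T ∈ tables n, (ind (rule1 m) T - ind rulePB T) * gg n w θ T
      = gg n w θ (m, m+1, 0, 0) + gg n w θ (m, 0, m+1, 0) := by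
    rw [← Finset.sum_subset hsub hzero, Finset.sum_pair hne]
    simp only [ind, hr1T1, hr1T2, hpbT1, hpbT2, if_pos rfl, ite_true,
      if_neg (show ¬(0:Fin 2) = 1 by decide)]
    ring
  have hmc : mcoef n (m, 0, m+1, 0) = mcoef n (m, m+1, 0, 0) := by
    simp only [mcoef]; ring_nf
  have hgg : gg n w θ (m, m+1, 0, 0) + gg n w θ (m, 0, m+1, 0)
      = mcoef n (m, m+1, 0, 0) * ((θ^m*(1-θ)^m) *
          (w*(θ^(n+1)+(1-θ)^(n+1)) - 2*(1-w)*(θ^n*(1-θ)))) := by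
    subst hn
    simp only [gg, fA, fB, hmc]
    ring
  have hneg : gg n w θ (m, m+1, 0, 0) + gg n w θ (m, 0, m+1, 0) < 0 := by
    rw [hgg]
    apply mul_neg_of_pos_of_neg (mcoef_pos _)
    apply mul_neg_of_pos_of_neg
    · have hθ0 : (0:ℝ) < θ := by linarith
      have h1θ : (0:ℝ) < 1-θ := by linarith
      positivity
    · linarith
  rw [hsum_eq] at hdiff
  linarith

/-! ### Condition 2 in polynomial form -/

lemma cond2_iff (hw0 : 0 < w) (hθ0 : 0 < θ) (h1θ : 0 < 1-θ) :
    (2 * (1 - w) / w ≤ θ / (1 - θ) + (θ / (1 - θ)) ^ (-(n : ℤ)))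
      ↔ 2*(1-w)*(θ^n*(1-θ)) ≤ w*(θ^(n+1) + (1-θ)^(n+1)) := by
  have hz : (θ / (1 - θ)) ^ (-(n:ℤ)) = (1-θ)^n / θ^n := by
    rw [zpow_neg, zpow_natCast, ← inv_pow, inv_div, div_pow]
  rw [hz, div_add_div _ _ (ne_of_gt h1θ) (ne_of_gt (pow_pos hθ0 n)),
    div_le_div_iff₀ hw0 (by positivity)]
  have eB : w*(θ^(n+1) + (1-θ)^(n+1)) = (θ*θ^n + (1-θ)*(1-θ)^n)*w := by
    rw [pow_succ, pow_succ]; ring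
  have eA : 2*(1-w)*(θ^n*(1-θ)) = 2*(1-w)*((1-θ)*θ^n) := by ring
  rw [eA, eB]

end PBopt

/-- The premiss-based rule is optimal if and only if `θ ≥ w` and
`θ/(1−θ) + (θ/(1−θ))^{−n} ≥ 2(1−w)/w`. -/
theorem premissBased_optimal_iff
    (n m : ℕ) (hm : 1 ≤ m) (hn : n = 2 * m + 1)
    (w : ℝ) (hw0 : 0 < w) (hw1 : w < 1)
    (θ : ℝ) (hθ : 1/2 < θ) (hθ1 : θ < 1) :
    (∀ r : ℕ × ℕ × ℕ × ℕ → Fin 2, Admissible n r →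
        loss n w θ rulePB ≤ loss n w θ r) ↔
    (w ≤ θ ∧ 2 * (1 - w) / w ≤ θ / (1 - θ) + (θ / (1 - θ)) ^ (-(n : ℤ))) := by
  have hθ0 : (0:ℝ) < θ := by linarith
  have h1θ : (0:ℝ) < 1-θ := by linarith
  constructor
  · intro hopt
    have hwθ : w ≤ θ := PBopt.nec1 hn hw0 hw1 hθ hθ1 (hopt PBopt.rule3 PBopt.adm3)
    refine ⟨hwθ, ?_⟩
    rw [PBopt.cond2_iff hw0 hθ0 h1θ]
    exact PBopt.nec2 hn hw0 hw1 hθ hθ1 (hopt (PBopt.rule1 m) PBopt.adm1)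
  · rintro ⟨hwθ, hc2⟩ r hr
    exact PBopt.sufficiency hn hw0 hw1 hθ hθ1 hwθ
      ((PBopt.cond2_iff hw0 hθ0 h1θ).mp hc2) r hr.1
end
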